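/- arXiv:1001.3175 — 3 statements merged into one kernel-verified Lean document; each statement's English description precedes it below -/
import Mathlib

section
/- Let P and P' be Eulerian binomial posets of rank 2m+2, m ≥ 2, with atom functions A and A' agreeing for n ≤ 2m. Then (1/A(2m+1))·(1 − 1/A(2m+2)) = (1/A'(2m+1))·(1 − 1/A'(2m+2)). -/
open scoped Classical

/-! ## Basic notions: saturated chains, rank functions, Euler–Poincaré, Eulerian,
binomial / Sheffer / triangular posets. -/

/-- A saturated (maximal) chain from `x` to `y` in a poset, encoded as a list. -/
def IsSatChain {α : Type*} [PartialOrder α] (x y : α) (l : List α) : Prop :=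
  l.Chain' (· ⋖ ·) ∧ l.head? = some x ∧ l.getLast? = some y

/-- The number of maximal chains of the interval `[x, y]`. -/
noncomputable def chainCount {α : Type*} [PartialOrder α] (x y : α) : ℕ :=
  Nat.card {l : List α // IsSatChain x y l}

/-- `rk` is a rank function for a graded poset with `⊥`:
the bottom has rank `0` and ranks increase by one across cover relations. -/
def IsRankFunction {α : Type*} [PartialOrder α] [OrderBot α] (rk : α → ℕ) : Prop :=
  rk ⊥ = 0 ∧ ∀ x y : α, x ⋖ y → rk y = rk x + 1

/-- The interval `[x, y]` satisfies the Euler–Poincaré relation: it has as many elements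
of even rank as of odd rank. -/
def EulerPoincare {α : Type*} [Fintype α] [PartialOrder α] (rk : α → ℕ) (x y : α) : Prop :=
  (Finset.univ.filter fun z => x ≤ z ∧ z ≤ y ∧ Even (rk z)).card =
    (Finset.univ.filter fun z => x ≤ z ∧ z ≤ y ∧ ¬ Even (rk z)).card

/-- A graded poset is Eulerian if every non-singleton interval satisfies
the Euler–Poincaré relation. -/
def IsEulerian {α : Type*} [Fintype α] [PartialOrder α] (rk : α → ℕ) : Prop :=
  ∀ x y : α, x < y → EulerPoincare rk x y

/-- A binomial poset: the number of maximal chains of an interval depends only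
on its length, via the factorial function `B`. -/
def IsBinomial {α : Type*} [PartialOrder α] (rk : α → ℕ) (B : ℕ → ℕ) : Prop :=
  ∀ x y : α, x ≤ y → chainCount x y = B (rk y - rk x)

/-- A Sheffer poset: Sheffer intervals `[⊥, y]` have `D (ρ y)` maximal chains and binomial
intervals `[x, y]` with `x ≠ ⊥` have `B (ρ y - ρ x)` maximal chains. -/
def IsSheffer {α : Type*} [PartialOrder α] [OrderBot α] (rk : α → ℕ) (B D : ℕ → ℕ) : Prop :=
  (∀ y : α, chainCount ⊥ y = D (rk y)) ∧
    (∀ x y : α, x ≠ ⊥ → x ≤ y → chainCount x y = B (rk y - rk x))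

/-- A triangular poset: the number of maximal chains of `[x, y]` depends only on
`ρ x` and `ρ y`. -/
def IsTriangular {α : Type*} [PartialOrder α] (rk : α → ℕ) (B : ℕ → ℕ → ℕ) : Prop :=
  ∀ x y : α, x ≤ y → chainCount x y = B (rk x) (rk y)

/-! ## Constructions: summations, dual suspension, butterfly posets, polygon face lattices. -/

/-- The proper part of a bounded poset. -/
abbrev ProperPart (Q : Type*) [PartialOrder Q] [OrderBot Q] [OrderTop Q] : Type _ :=
  {x : Q // x ≠ ⊥ ∧ x ≠ ⊤}

/-- The summation `⊞_{i} Q i` of a family of bounded posets: identify all the minimal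
elements and all the maximal elements of the disjoint union of the `Q i`. -/
abbrev FamSum {ι : Type*} (Q : ι → Type*) [∀ i, PartialOrder (Q i)] [∀ i, OrderBot (Q i)]
    [∀ i, OrderTop (Q i)] : Type _ :=
  WithBot (WithTop ((i : ι) × ProperPart (Q i)))

/-- The `k`-summation `⊞^k Q`: identify all the minimal elements and all the maximal
elements of `k` disjoint copies of `Q`. -/
abbrev KSum (k : ℕ) (Q : Type*) [PartialOrder Q] [OrderBot Q] [OrderTop Q] : Type _ :=
  FamSum (fun _ : Fin k => Q)

/-- The rank function of a `k`-summation, induced by a rank function on `Q`. -/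
def ksumRk {k : ℕ} {Q : Type*} [PartialOrder Q] [OrderBot Q] [OrderTop Q] (rk : Q → ℕ) :
    KSum k Q → ℕ :=
  WithBot.recBotCoe 0 (WithTop.recTopCoe (rk ⊤) (fun s => rk s.2.1))

/-- The underlying type of the dual suspension minus its bottom: two new atoms together
with the proper (non-bottom) part of `P`. -/
def DSuspMid (P : Type*) [PartialOrder P] [OrderBot P] : Type _ :=
  Fin 2 ⊕ {x : P // x ≠ ⊥}

instance DSuspMid.partialOrder (P : Type*) [PartialOrder P] [OrderBot P] :
    PartialOrder (DSuspMid P) where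
  le a b :=
    match a, b with
    | .inl i, .inl j => i = j
    | .inl _, .inr _ => True
    | .inr _, .inl _ => False
    | .inr x, .inr y => x ≤ y
  le_refl a := by cases a with
    | inl i => exact rfl
    | inr x => exact le_refl x.1
  le_trans a b c hab hbc := by
    cases a with
    | inl i =>
      cases c with
      | inl k =>
        cases b with
        | inl j => exact Eq.trans (hab : i = j) (hbc : j = k)
        | inr y => exact ((hbc : False)).elim
      | inr z => trivial
    | inr x =>
      cases b with
      | inl j => exact ((hab : False)).elim
      | inr y =>
        cases c with
        | inl k => exact ((hbc : False)).elim
        | inr z => exact le_trans (α := {x : P // x ≠ ⊥}) hab hbc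
  le_antisymm a b hab hba := by
    cases a with
    | inl i =>
      cases b with
      | inl j => exact congrArg Sum.inl (hab : _ = _)
      | inr y => exact ((hba : False)).elim
    | inr x =>
      cases b with
      | inl j => exact ((hab : False)).elim
      | inr y => exact congrArg Sum.inr (le_antisymm (α := {x : P // x ≠ ⊥}) hab hba)

/-- The dual suspension `Σ*(P)`: insert two new elements between `⊥` and the atoms of `P`. -/
abbrev DSusp (P : Type*) [PartialOrder P] [OrderBot P] : Type _ :=
  WithBot (DSuspMid P)

/-- The rank function of the dual suspension induced by a rank function on `P`. -/
def dsuspRk {P : Type*} [PartialOrder P] [OrderBot P] (rk : P → ℕ) : DSusp P → ℕ :=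
  WithBot.recBotCoe 0 (Sum.elim (fun _ => 1) (fun x => rk x.1 + 1))

noncomputable instance DSuspMid.fintype (P : Type*) [PartialOrder P] [OrderBot P] [Fintype P] :
    Fintype (DSuspMid P) := by
  unfold DSuspMid; infer_instance

instance DSuspMid.orderTop (P : Type*) [PartialOrder P] [OrderBot P] [OrderTop P] [Nontrivial P] :
    OrderTop (DSuspMid P) where
  top := Sum.inr ⟨⊤, fun h => by
    rcases exists_pair_ne P with ⟨a, b, hab⟩
    have ha : a = ⊤ := le_antisymm le_top (h.le.trans bot_le)
    have hb : b = ⊤ := le_antisymm le_top (h.le.trans bot_le)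
    exact hab (ha.trans hb.symm)⟩
  le_top a := by
    cases a with
    | inl i => trivial
    | inr x => exact le_top (α := P) (a := x.1)

/-- The butterfly poset `T n` of rank `n`: a `⊥`, a `⊤`, and two elements at each rank
`1, …, n - 1`; any two elements at consecutive ranks are comparable. -/
def Butterfly (n : ℕ) : Type :=
  {p : Fin (n + 1) × Fin 2 // ((p.1 : ℕ) = 0 ∨ (p.1 : ℕ) = n) → p.2 = 0}

namespace Butterfly

instance (n : ℕ) : PartialOrder (Butterfly n) where
  le p q := p = q ∨ (p.1.1 : ℕ) < (q.1.1 : ℕ)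
  le_refl p := Or.inl rfl
  le_trans p q r h₁ h₂ := by
    rcases h₁ with rfl | h₁
    · exact h₂
    · rcases h₂ with rfl | h₂
      · exact Or.inr h₁
      · exact Or.inr (h₁.trans h₂)
  le_antisymm p q h₁ h₂ := by
    rcases h₁ with rfl | h₁
    · rfl
    · rcases h₂ with rfl | h₂
      · rfl
      · exact absurd (h₁.trans h₂) (lt_irrefl _)

instance (n : ℕ) : OrderBot (Butterfly n) where
  bot := ⟨(0, 0), fun _ => rfl⟩
  bot_le p := by
    rcases Nat.eq_zero_or_pos (p.1.1 : ℕ) with h | h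
    · left
      apply Subtype.ext
      have h2 : p.1.2 = 0 := p.2 (Or.inl (by exact_mod_cast h))
      apply Prod.ext
      · exact (Fin.ext (by simpa using h.symm))
      · exact h2.symm
    · exact Or.inr (by simpa using h)

instance (n : ℕ) : OrderTop (Butterfly n) where
  top := ⟨(Fin.last n, 0), fun _ => rfl⟩
  le_top p := by
    rcases eq_or_lt_of_le (Nat.lt_succ_iff.mp p.1.1.isLt) with h | h
    · left
      apply Subtype.ext
      have h2 : p.1.2 = 0 := p.2 (Or.inr h)
      apply Prod.ext
      · exact (Fin.ext (by simpa using h))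
      · exact h2
    · exact Or.inr (by simpa using h)

instance (n : ℕ) : Fintype (Butterfly n) := by
  unfold Butterfly; exact Subtype.fintype _

/-- The rank function of the butterfly poset. -/
def rk {n : ℕ} (p : Butterfly n) : ℕ := p.1.1

end Butterfly

/-- The middle levels (vertices and edges) of the face lattice of a `q`-gon:
`(0, i)` is the `i`-th vertex and `(1, i)` is the edge joining vertices `i` and `i + 1`. -/
def PolyMid (q : ℕ) : Type := Fin 2 × Fin q

instance PolyMid.partialOrder (q : ℕ) : PartialOrder (PolyMid q) where
  le a b := a = b ∨ (a.1 = 0 ∧ b.1 = 1 ∧ (a.2 = b.2 ∨ (a.2 : ℕ) = ((b.2 : ℕ) + 1) % q))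
  le_refl a := Or.inl rfl
  le_trans a b c h₁ h₂ := by
    rcases h₁ with rfl | h₁
    · exact h₂
    · rcases h₂ with rfl | h₂
      · exact Or.inr h₁
      · obtain ⟨hb, _⟩ := h₂
        rw [h₁.2.1] at hb
        exact absurd hb (by decide)
  le_antisymm a b h₁ h₂ := by
    rcases h₁ with rfl | h₁
    · rfl
    · rcases h₂ with rfl | h₂
      · rfl
      · obtain ⟨hb, _⟩ := h₂
        rw [h₁.2.1] at hb
        exact absurd hb (by decide)

/-- The face lattice `P_q` of a `q`-gon. -/
abbrev PolygonFaceLattice (q : ℕ) : Type := WithBot (WithTop (PolyMid q))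

noncomputable instance ProperPart.fintype (Q : Type*) [Fintype Q] [PartialOrder Q]
    [OrderBot Q] [OrderTop Q] : Fintype (ProperPart Q) :=
  Subtype.fintype _

instance WithTop.instFintypeOfFintype {X : Type*} [Fintype X] : Fintype (WithTop X) :=
  inferInstanceAs (Fintype (Option X))

instance WithBot.instFintypeOfFintype {X : Type*} [Fintype X] : Fintype (WithBot X) :=
  inferInstanceAs (Fintype (Option X))


namespace S5aux
variable {α : Type*} [PartialOrder α] {rk : α → ℕ} {x y : α} {l : List α}

lemma sat_ne_nil (h : IsSatChain x y l) : l ≠ [] := by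
  intro hnil; rw [hnil] at h; exact absurd h.2.1 (by simp)

lemma sat_getElem_zero (h : IsSatChain x y l) (h0 : 0 < l.length) : l[0] = x := by
  have := h.2.1
  rw [List.head?_eq_getElem?, List.getElem?_eq_getElem h0] at this
  exact Option.some.inj this

lemma sat_getElem_rank (hcov : ∀ a b : α, a ⋖ b → rk b = rk a + 1)
    (h : IsSatChain x y l) : ∀ i (hi : i < l.length), rk l[i] = rk x + i := by
  intro i
  induction i with
  | zero => intro hi; rw [sat_getElem_zero h hi, Nat.add_zero]
  | succ n ih =>
    intro hi
    have hn : n < l.length - 1 := by omega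
    have hcov' := List.isChain_iff_getElem.mp h.1 n (by omega)
    rw [hcov _ _ hcov', ih (by omega)]
    omega

lemma sat_length (hcov : ∀ a b : α, a ⋖ b → rk b = rk a + 1)
    (h : IsSatChain x y l) : rk x + l.length = rk y + 1 := by
  have hne := sat_ne_nil h
  have hpos : 0 < l.length := List.length_pos_iff.mpr hne
  have hl := h.2.2
  rw [List.getLast?_eq_getElem?, List.getElem?_eq_getElem (by omega)] at hl
  have := sat_getElem_rank hcov h (l.length - 1) (by omega)
  rw [Option.some.inj hl] at this
  omega


lemma sat_getElem_lt (h : IsSatChain x y l) {i j : ℕ} (hij : i < j) (hj : j < l.length) :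
    l[i]'(lt_trans hij hj) < l[j] := by
  have hp : l.Pairwise (· < ·) := by
    rw [← List.isChain_iff_pairwise]
    exact h.1.imp (fun _ _ hc => hc.lt)
  exact List.pairwise_iff_getElem.mp hp i j _ _ hij

lemma sat_getElem_le (h : IsSatChain x y l) {i j : ℕ} (hij : i ≤ j) (hj : j < l.length) :
    l[i]'(lt_of_le_of_lt hij hj) ≤ l[j] := by
  rcases eq_or_lt_of_le hij with rfl | hlt
  · exact le_refl _
  · exact (sat_getElem_lt h hlt hj).le

lemma sat_getElem_last (h : IsSatChain x y l) (hl : l.length - 1 < l.length) :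
    l[l.length - 1] = y := by
  have := h.2.2
  rw [List.getLast?_eq_getElem?, List.getElem?_eq_getElem hl] at this
  exact Option.some.inj this

lemma sat_le (h : IsSatChain x y l) : x ≤ y := by
  have hpos : 0 < l.length := List.length_pos_iff.mpr (sat_ne_nil h)
  have h0 := sat_getElem_zero h hpos
  have hlast := sat_getElem_last h (by omega)
  rw [← h0, ← hlast]
  exact sat_getElem_le h (by omega) (by omega)

lemma sat_singleton (x : α) : IsSatChain x x [x] :=
  ⟨List.isChain_singleton x, rfl, rfl⟩

lemma chainCount_self (hcov : ∀ a b : α, a ⋖ b → rk b = rk a + 1) (x : α) :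
    chainCount x x = 1 := by
  rw [chainCount, Nat.card_eq_one_iff_unique]
  constructor
  · constructor
    intro ⟨l, hl⟩ ⟨l', hl'⟩
    have key : ∀ m : List α, IsSatChain x x m → m = [x] := by
      intro m hm
      have hlen := sat_length hcov hm
      have : m.length = 1 := by omega
      obtain ⟨a, rfl⟩ := List.length_eq_one_iff.mp this
      have := sat_getElem_zero hm (by simp)
      simp at this
      rw [this]
    simp [key l hl, key l' hl']
  · exact ⟨⟨[x], sat_singleton x⟩⟩

lemma chainCount_covBy (hcov : ∀ a b : α, a ⋖ b → rk b = rk a + 1) (hxy : x ⋖ y) :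
    chainCount x y = 1 := by
  rw [chainCount, Nat.card_eq_one_iff_unique]
  constructor
  · constructor
    intro ⟨l, hl⟩ ⟨l', hl'⟩
    have key : ∀ m : List α, IsSatChain x y m → m = [x, y] := by
      intro m hm
      have hlen := sat_length hcov hm
      rw [hcov x y hxy] at hlen
      have : m.length = 2 := by omega
      obtain ⟨a, b, rfl⟩ := List.length_eq_two.mp this
      have h0 := sat_getElem_zero hm (by simp)
      have h1 := sat_getElem_last hm (by simp)
      simp at h0 h1
      rw [h0, h1]
    simp [key l hl, key l' hl']
  · refine ⟨⟨[x, y], ?_, rfl, rfl⟩⟩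
    exact List.isChain_cons_cons.mpr ⟨hxy, List.isChain_singleton y⟩

lemma sat_finite [Finite α] (x y : α) : Finite {l : List α // IsSatChain x y l} := by
  haveI := Fintype.ofFinite α
  have : Function.Injective
      (fun l : {l : List α // IsSatChain x y l} => l.1.toFinset) := by
    intro ⟨l, hl⟩ ⟨l', hl'⟩ hEq
    simp only [Subtype.mk.injEq] at hEq ⊢
    have hs : l.Pairwise (· < ·) := by
      rw [← List.isChain_iff_pairwise]; exact hl.1.imp (fun _ _ hc => hc.lt)
    have hs' : l'.Pairwise (· < ·) := by
      rw [← List.isChain_iff_pairwise]; exact hl'.1.imp (fun _ _ hc => hc.lt)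
    have hperm : List.Perm l l' := by
      apply List.perm_of_nodup_nodup_toFinset_eq hs.nodup hs'.nodup hEq
    exact List.Perm.eq_of_pairwise (fun a b _ _ h1 h2 => absurd (h1.trans h2) (lt_irrefl _)) hs hs' hperm
  exact Finite.of_injective _ this


lemma exists_covBy_le [Fintype α] (h : x < y) : ∃ z, x ⋖ z ∧ z ≤ y := by
  have hne : (Finset.univ.filter fun z => x < z ∧ z ≤ y).Nonempty :=
    ⟨y, by simp [h]⟩
  obtain ⟨m, hm, hmin⟩ := Finset.exists_minimal hne
  simp only [Finset.mem_filter, Finset.mem_univ, true_and] at hm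
  refine ⟨m, ⟨hm.1, ?_⟩, hm.2⟩
  intro c hxc hcm
  exact hcm.not_ge (hmin (by simp [hxc, le_trans hcm.le hm.2]) hcm.le)

lemma exists_satChain_aux [Fintype α] (y : α) :
    ∀ (n : ℕ) (x : α), (Finset.univ.filter fun z => x < z).card ≤ n → x ≤ y →
      ∃ l, IsSatChain x y l := by
  intro n
  induction n with
  | zero =>
    intro x hc hxy
    rcases eq_or_lt_of_le hxy with rfl | hlt
    · exact ⟨[x], sat_singleton x⟩
    · exfalso
      have : y ∈ Finset.univ.filter fun z => x < z := by simp [hlt]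
      have := Finset.card_pos.mpr ⟨y, this⟩
      omega
  | succ n ih =>
    intro x hc hxy
    rcases eq_or_lt_of_le hxy with rfl | hlt
    · exact ⟨[x], sat_singleton x⟩
    · obtain ⟨z, hxz, hzy⟩ := exists_covBy_le hlt
      have hss : (Finset.univ.filter fun w => z < w) ⊂
          (Finset.univ.filter fun w => x < w) := by
        constructor
        · intro w hw
          simp only [Finset.mem_filter, Finset.mem_univ, true_and] at hw ⊢
          exact lt_trans hxz.lt hw
        · intro hsub
          have := hsub (by simp [hxz.lt] : z ∈ _)
          simp at this
      have hcard := Finset.card_lt_card hss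
      obtain ⟨l, hl⟩ := ih z (by omega) hzy
      refine ⟨x :: l, ?_, rfl, ?_⟩
      · apply List.isChain_cons.mpr
        refine ⟨?_, hl.1⟩
        intro h hh
        rw [hl.2.1] at hh
        rwa [Option.some.inj hh] at hxz
      · rw [List.getLast?_cons, hl.2.2]
        rfl

lemma exists_satChain [Fintype α] (h : x ≤ y) : ∃ l, IsSatChain x y l :=
  exists_satChain_aux y _ x le_rfl h


section Split
variable {k : ℕ} {z : α}

-- Split lemmas
lemma sat_take (hl : IsSatChain x y l) (hk' : k < l.length) :
    IsSatChain x (l[k]) (l.take (k + 1)) := by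
  refine ⟨hl.1.take _, ?_, ?_⟩
  · rw [List.head?_eq_getElem?, List.getElem?_take_of_lt (Nat.succ_pos k),
      ← List.head?_eq_getElem?, hl.2.1]
  · have hlen : (l.take (k + 1)).length = k + 1 := by
      rw [List.length_take]; omega
    rw [List.getLast?_eq_getElem?, hlen]
    simp only [Nat.add_sub_cancel]
    rw [List.getElem?_take_of_lt (Nat.lt_succ_self k), List.getElem?_eq_getElem hk']

lemma sat_drop (hl : IsSatChain x y l) (hk' : k < l.length) :
    IsSatChain (l[k]) y (l.drop k) := by
  refine ⟨hl.1.drop _, ?_, ?_⟩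
  · rw [List.head?_eq_getElem?, List.getElem?_drop, Nat.add_zero,
      List.getElem?_eq_getElem hk']
  · have hlen : (l.drop k).length = l.length - k := List.length_drop
    rw [List.getLast?_eq_getElem?, hlen, List.getElem?_drop]
    have : k + (l.length - k - 1) = l.length - 1 := by omega
    rw [this, ← List.getLast?_eq_getElem?, hl.2.2]

-- Join lemmas
variable {l₁ l₂ : List α}

lemma join_len (hcov : ∀ a b : α, a ⋖ b → rk b = rk a + 1) (hz : rk z = rk x + k) (h₁ : IsSatChain x z l₁) : l₁.length = k + 1 := by
  have := sat_length hcov h₁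
  omega

lemma join_last (h₁ : IsSatChain x z l₁) : l₁[l₁.length - 1]'(by
    have := List.length_pos_iff.mpr (sat_ne_nil h₁); omega) = z := by
  exact sat_getElem_last h₁ _

lemma join_sat (h₁ : IsSatChain x z l₁) (h₂ : IsSatChain z y l₂) :
    IsSatChain x y (l₁ ++ l₂.tail) := by
  obtain ⟨t, rfl⟩ : ∃ t, l₂ = z :: t := by
    obtain ⟨t, ht⟩ := List.head?_eq_some_iff.mp h₂.2.1
    exact ⟨t, ht⟩
  refine ⟨?_, ?_, ?_⟩
  · refine List.IsChain.append h₁.1 (h₂.1.tail) ?_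
    intro a ha b hb
    rw [h₁.2.2] at ha
    cases Option.some.inj ha
    simp only [List.tail_cons] at hb
    cases t with
    | nil => simp at hb
    | cons c t' =>
      rw [List.head?_cons] at hb
      cases Option.some.inj hb
      exact (List.isChain_cons_cons.mp h₂.1).1
  · rw [List.head?_append_of_ne_nil _ (sat_ne_nil h₁), h₁.2.1]
  · simp only [List.tail_cons]
    cases t with
    | nil =>
      simp only [List.append_nil]
      rw [h₁.2.2]
      have : z = y := by
        have := h₂.2.2
        simp at this
        exact this
      rw [this]
    | cons c t' =>
      rw [List.getLast?_append_of_ne_nil _ (by simp)]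
      have := h₂.2.2
      rwa [List.getLast?_cons_cons] at this

lemma join_getElem (hcov : ∀ a b : α, a ⋖ b → rk b = rk a + 1) (hz : rk z = rk x + k) (h₁ : IsSatChain x z l₁)
    (h₂ : IsSatChain z y l₂) :
    (l₁ ++ l₂.tail)[k]'(by
      rw [List.length_append, join_len hcov hz h₁]; omega) = z := by
  have hlen := join_len hcov hz h₁
  have hq : l₁[k]? = some z := by
    have h2 := h₁.2.2
    rw [List.getLast?_eq_getElem?, hlen, Nat.add_sub_cancel] at h2
    exact h2
  have hq2 : (l₁ ++ l₂.tail)[k]? = some z := by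
    rw [List.getElem?_append_left (by omega : k < l₁.length)]
    exact hq
  rw [List.getElem?_eq_getElem (by rw [List.length_append]; omega)] at hq2
  exact Option.some.inj hq2

lemma join_take (hcov : ∀ a b : α, a ⋖ b → rk b = rk a + 1) (hz : rk z = rk x + k) (h₁ : IsSatChain x z l₁) :
    (l₁ ++ l₂.tail).take (k + 1) = l₁ :=
  List.take_left' (join_len hcov hz h₁)

lemma join_drop (hcov : ∀ a b : α, a ⋖ b → rk b = rk a + 1) (hz : rk z = rk x + k) (h₁ : IsSatChain x z l₁)
    (h₂ : IsSatChain z y l₂) :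
    (l₁ ++ l₂.tail).drop k = l₂ := by
  have hlen := join_len hcov hz h₁
  rw [List.drop_append_of_le_length (by omega)]
  have hdrop : l₁.drop k = [z] := by
    rw [List.drop_eq_getElem_cons (by omega : k < l₁.length)]
    have h1 : l₁.drop (k + 1) = [] := by
      rw [← hlen, List.drop_length]
    rw [h1]
    have hq : l₁[k]? = some z := by
      have h2 := h₁.2.2
      rw [List.getLast?_eq_getElem?, hlen, Nat.add_sub_cancel] at h2
      exact h2
    rw [List.getElem?_eq_getElem (by omega : k < l₁.length)] at hq
    rw [Option.some.inj hq]
  rw [hdrop]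
  exact List.cons_head?_tail h₂.2.1

end Split

lemma chainCount_split [Fintype α] (hcov : ∀ a b : α, a ⋖ b → rk b = rk a + 1)
    (x y : α) (k : ℕ) (hk : rk x + k ≤ rk y) :
    chainCount x y = ∑ z ∈ Finset.univ.filter (fun z : α => x ≤ z ∧ z ≤ y ∧ rk z = rk x + k),
      chainCount x z * chainCount z y := by
  classical
  have hbound : ∀ lp : {l : List α // IsSatChain x y l}, k < lp.1.length := fun lp => by
    have := sat_length hcov lp.2; omega
  let φ : {l : List α // IsSatChain x y l} → {z : α // x ≤ z ∧ z ≤ y ∧ rk z = rk x + k} :=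
    fun lp =>
    ⟨lp.1[k]'(hbound lp), by
      have hlen := sat_length hcov lp.2
      have h0 := sat_getElem_zero lp.2 (by omega)
      have hlast := sat_getElem_last lp.2 (by omega)
      refine ⟨?_, ?_, ?_⟩
      · conv_lhs => rw [← h0]
        exact sat_getElem_le lp.2 (Nat.zero_le k) (hbound lp)
      · conv_rhs => rw [← hlast]
        exact sat_getElem_le lp.2 (by omega) (by omega)
      · exact sat_getElem_rank hcov lp.2 k (hbound lp)⟩
  have e2 : ∀ z : {z : α // x ≤ z ∧ z ≤ y ∧ rk z = rk x + k},
      {lp : {l : List α // IsSatChain x y l} // φ lp = z} ≃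
      ({l : List α // IsSatChain x z.1 l} × {l : List α // IsSatChain z.1 y l}) := by
    intro z
    refine ⟨fun s => (⟨s.1.1.take (k+1), ?_⟩, ⟨s.1.1.drop k, ?_⟩),
           fun p => ⟨⟨p.1.1 ++ p.2.1.tail, join_sat p.1.2 p.2.2⟩, ?_⟩, ?_, ?_⟩
    · have hz : s.1.1[k]'(hbound s.1) = z.1 := congrArg Subtype.val s.2
      rw [← hz]
      exact sat_take s.1.2 (hbound s.1)
    · have hz : s.1.1[k]'(hbound s.1) = z.1 := congrArg Subtype.val s.2
      rw [← hz]
      exact sat_drop s.1.2 (hbound s.1)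
    · apply Subtype.ext
      exact join_getElem hcov z.2.2.2 p.1.2 p.2.2
    · intro s
      apply Subtype.ext
      apply Subtype.ext
      show (s.1.1.take (k+1)) ++ (s.1.1.drop k).tail = s.1.1
      rw [List.tail_drop, List.take_append_drop]
    · intro p
      have h1 : (p.1.1 ++ p.2.1.tail).take (k+1) = p.1.1 :=
        join_take hcov z.2.2.2 p.1.2
      have h2 : (p.1.1 ++ p.2.1.tail).drop k = p.2.1 :=
        join_drop hcov z.2.2.2 p.1.2 p.2.2
      exact Prod.ext (Subtype.ext h1) (Subtype.ext h2)
  haveI hf : Finite {l : List α // IsSatChain x y l} := sat_finite x y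
  have key : ∀ z : {z : α // x ≤ z ∧ z ≤ y ∧ rk z = rk x + k},
      Nat.card {lp : {l : List α // IsSatChain x y l} // φ lp = z} =
        chainCount x z.1 * chainCount z.1 y := fun z => by
    rw [Nat.card_congr (e2 z), Nat.card_prod]; rfl
  haveI : Fintype {z : α // x ≤ z ∧ z ≤ y ∧ rk z = rk x + k} := Fintype.ofFinite _
  haveI : ∀ z : {z : α // x ≤ z ∧ z ≤ y ∧ rk z = rk x + k},
      Fintype {lp : {l : List α // IsSatChain x y l} // φ lp = z} := fun z =>
    Fintype.ofFinite _
  have : chainCount x y =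
      ∑ z : {z : α // x ≤ z ∧ z ≤ y ∧ rk z = rk x + k}, chainCount x z.1 * chainCount z.1 y := by
    rw [chainCount, Nat.card_congr (Equiv.sigmaFiberEquiv φ).symm,
      Nat.card_eq_fintype_card, Fintype.card_sigma]
    refine Finset.sum_congr rfl ?_
    intro z _
    rw [← key z, Nat.card_eq_fintype_card]
  rw [this]
  exact (Finset.sum_subtype _ (fun z => by simp)
    (fun z => chainCount x z * chainCount z y)).symm


section Poset

variable {α : Type*} [Fintype α] [PartialOrder α] [BoundedOrder α]

lemma B_zero {rk : α → ℕ} {B : ℕ → ℕ} (hrk : IsRankFunction rk) (hB : IsBinomial rk B) :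
    B 0 = 1 := by
  have h := hB ⊤ ⊤ le_rfl
  rw [chainCount_self hrk.2, Nat.sub_self] at h
  exact h.symm

lemma Bn_pos {rk : α → ℕ} {B : ℕ → ℕ} (hrk : IsRankFunction rk) (hB : IsBinomial rk B) :
    0 < B (rk ⊤) := by
  obtain ⟨l, hl⟩ := exists_satChain (bot_le : (⊥ : α) ≤ ⊤)
  haveI := sat_finite (⊥ : α) ⊤
  haveI : Nonempty {l : List α // IsSatChain ⊥ ⊤ l} := ⟨⟨l, hl⟩⟩
  have hpos : 0 < chainCount (⊥ : α) ⊤ := Nat.card_pos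
  rwa [hB ⊥ ⊤ bot_le, hrk.1, Nat.sub_zero] at hpos

lemma N_mul {rk : α → ℕ} {B : ℕ → ℕ} (hrk : IsRankFunction rk) (hB : IsBinomial rk B)
    (k : ℕ) (hk : k ≤ rk ⊤) :
    (Finset.univ.filter fun z : α => rk z = k).card * (B k * B (rk ⊤ - k)) = B (rk ⊤) := by
  have hs := chainCount_split (rk := rk) hrk.2 ⊥ ⊤ k (by rw [hrk.1]; omega)
  rw [hB ⊥ ⊤ bot_le, hrk.1, Nat.sub_zero] at hs
  simp only [hrk.1, Nat.zero_add, bot_le, le_top, true_and] at hs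
  rw [hs]
  rw [Finset.sum_congr rfl (fun z hz => ?_), Finset.sum_const, smul_eq_mul]
  rw [Finset.mem_filter] at hz
  rw [hB ⊥ z bot_le, hB z ⊤ le_top, hrk.1, Nat.sub_zero, hz.2]

lemma Bk_pos {rk : α → ℕ} {B : ℕ → ℕ} (hrk : IsRankFunction rk) (hB : IsBinomial rk B)
    (k : ℕ) (hk : k ≤ rk ⊤) : 0 < B k := by
  have h1 := N_mul hrk hB k hk
  have h2 := Bn_pos hrk hB
  by_contra h
  push_neg at h
  interval_cases hBk : B k
  omega

lemma B_one {rk : α → ℕ} {B : ℕ → ℕ} (hrk : IsRankFunction rk) (hB : IsBinomial rk B)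
    (hn1 : 1 ≤ rk ⊤) : B 1 = 1 := by
  obtain ⟨l, hl⟩ := exists_satChain (bot_le : (⊥ : α) ≤ ⊤)
  have hlen := sat_length hrk.2 hl
  rw [hrk.1] at hlen
  have h0 : 0 < l.length - 1 := by omega
  have h01 := List.isChain_iff_getElem.mp hl.1 0 (by omega)
  have hc := hB _ _ h01.le
  rw [chainCount_covBy hrk.2 h01, hrk.2 _ _ h01, Nat.add_sub_cancel_left] at hc
  exact hc.symm

lemma rk_le {rk : α → ℕ} (hrk : IsRankFunction rk) (z : α) : rk z ≤ rk ⊤ := by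
  obtain ⟨l, hl⟩ := exists_satChain (le_top : z ≤ ⊤)
  have hlen := sat_length hrk.2 hl
  have hpos := List.length_pos_iff.mpr (sat_ne_nil hl)
  omega


lemma euler_alt_sum {rk : α → ℕ} {B : ℕ → ℕ} (hrk : IsRankFunction rk)
    (hB : IsBinomial rk B) (hE : IsEulerian rk) (hn1 : 1 ≤ rk ⊤) :
    ∑ k ∈ Finset.range (rk ⊤ + 1),
      (-1 : ℚ) ^ k / ((B k : ℚ) * (B (rk ⊤ - k) : ℚ)) = 0 := by
  classical
  set n := rk ⊤ with hn
  set N : ℕ → ℕ := fun k => (Finset.univ.filter fun z : α => rk z = k).card with hN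
  -- Euler-Poincaré on [⊥, ⊤]
  have hbt : (⊥ : α) < ⊤ := by
    rcases eq_or_lt_of_le (bot_le : (⊥ : α) ≤ ⊤) with h | h
    · exfalso; rw [← h, hrk.1] at hn; omega
    · exact h
  have hEP := hE ⊥ ⊤ hbt
  simp only [EulerPoincare] at hEP
  simp only [bot_le, le_top, true_and] at hEP
  -- fiberwise counts
  have hub : ∀ z : α, rk z ≤ n := rk_le hrk
  -- alternating sum of N vanishes
  have halt : ∑ k ∈ Finset.range (n + 1), (-1 : ℚ) ^ k * (N k : ℚ) = 0 := by
    have e : ∑ z : α, (-1 : ℚ) ^ (rk z) = ∑ k ∈ Finset.range (n + 1), (-1 : ℚ) ^ k * (N k : ℚ) := by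
      rw [← Finset.sum_fiberwise_of_maps_to (g := rk) (t := Finset.range (n + 1))
        (fun z _ => Finset.mem_range.mpr (by have := hub z; omega))
        (fun z => (-1 : ℚ) ^ (rk z))]
      refine Finset.sum_congr rfl (fun k _ => ?_)
      rw [Finset.sum_congr rfl (fun z hz => by
        rw [(Finset.mem_filter.mp hz).2] : ∀ z ∈ _, (-1 : ℚ) ^ (rk z) = (-1 : ℚ) ^ k)]
      rw [Finset.sum_const, nsmul_eq_mul, mul_comm]
    have e0 : ∑ z : α, (-1 : ℚ) ^ (rk z) = 0 := by
      rw [← Finset.sum_filter_add_sum_filter_not Finset.univ (fun z => Even (rk z))]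
      have ha : ∑ z ∈ Finset.univ.filter (fun z : α => Even (rk z)), (-1 : ℚ) ^ (rk z) =
          ((Finset.univ.filter (fun z : α => Even (rk z))).card : ℚ) := by
        rw [Finset.sum_congr rfl (fun z hz => (Finset.mem_filter.mp hz).2.neg_one_pow),
          Finset.sum_const, nsmul_eq_mul, mul_one]
      have hb : ∑ z ∈ Finset.univ.filter (fun z : α => ¬ Even (rk z)), (-1 : ℚ) ^ (rk z) =
          -((Finset.univ.filter (fun z : α => ¬ Even (rk z))).card : ℚ) := by
        rw [Finset.sum_congr rfl (fun z hz =>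
          (Nat.not_even_iff_odd.mp (Finset.mem_filter.mp hz).2).neg_one_pow),
          Finset.sum_const, nsmul_eq_mul, mul_neg, mul_one]
      rw [ha, hb]
      have : ((Finset.univ.filter (fun z : α => Even (rk z))).card : ℚ) =
          ((Finset.univ.filter (fun z : α => ¬ Even (rk z))).card : ℚ) := by
        exact_mod_cast hEP
      rw [this]
      ring
    rw [← e, e0]
  -- rewrite each term
  have hBne : ∀ k ≤ n, (B k : ℚ) ≠ 0 := fun k hk => by
    have := Bk_pos hrk hB k hk
    positivity
  have hBnne : (B n : ℚ) ≠ 0 := hBne n le_rfl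
  have hterm : ∀ k ∈ Finset.range (n + 1),
      (-1 : ℚ) ^ k / ((B k : ℚ) * (B (n - k) : ℚ)) =
        (1 / (B n : ℚ)) * ((-1 : ℚ) ^ k * (N k : ℚ)) := by
    intro k hk
    rw [Finset.mem_range] at hk
    have hk' : k ≤ n := by omega
    have hNk : (N k : ℚ) * ((B k : ℚ) * (B (n - k) : ℚ)) = (B n : ℚ) := by
      exact_mod_cast congrArg (Nat.cast : ℕ → ℚ) (N_mul hrk hB k hk')
    have h1 := hBne k hk'
    have h2 := hBne (n - k) (by omega)
    field_simp
    linear_combination hNk.symm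
  rw [Finset.sum_congr rfl hterm, ← Finset.mul_sum, halt, mul_zero]

end Poset

lemma peel {M : ℕ} (f : ℕ → ℚ) :
    ∑ k ∈ Finset.range (M + 4), f k =
      f 0 + f 1 + (∑ i ∈ Finset.range M, f (i + 2)) + f (M + 2) + f (M + 3) := by
  rw [Finset.sum_range_succ, Finset.sum_range_succ, Finset.sum_range_succ',
    Finset.sum_range_succ']
  ring

end S5aux

/-- Two Eulerian binomial posets of rank `2m + 2`, `m ≥ 2`, whose atom
functions `A n = B n / B (n - 1)` agree for `n ≤ 2m` satisfy
`(1/A(2m+1)) (1 - 1/A(2m+2)) = (1/A'(2m+1)) (1 - 1/A'(2m+2))`. -/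
theorem statement5 {α β : Type*} [Fintype α] [PartialOrder α] [BoundedOrder α]
    [Fintype β] [PartialOrder β] [BoundedOrder β]
    (rk : α → ℕ) (rk' : β → ℕ) (B B' : ℕ → ℕ) (m : ℕ) (hm : 2 ≤ m)
    (hrk : IsRankFunction rk) (hrk' : IsRankFunction rk')
    (hB : IsBinomial rk B) (hB' : IsBinomial rk' B')
    (hE : IsEulerian rk) (hE' : IsEulerian rk')
    (hrank : rk ⊤ = 2 * m + 2) (hrank' : rk' ⊤ = 2 * m + 2)
    (hagree : ∀ n ≤ 2 * m, (B n : ℚ) / (B (n - 1) : ℚ) = (B' n : ℚ) / (B' (n - 1) : ℚ)) :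
    ((B (2 * m) : ℚ) / (B (2 * m + 1) : ℚ)) *
        (1 - (B (2 * m + 1) : ℚ) / (B (2 * m + 2) : ℚ))
      = ((B' (2 * m) : ℚ) / (B' (2 * m + 1) : ℚ)) *
        (1 - (B' (2 * m + 1) : ℚ) / (B' (2 * m + 2) : ℚ)) := by
  classical
  have hB0 : B 0 = 1 := S5aux.B_zero hrk hB
  have hB0' : B' 0 = 1 := S5aux.B_zero hrk' hB'
  have hB1 : B 1 = 1 := S5aux.B_one hrk hB (by rw [hrank]; omega)
  have hB1' : B' 1 = 1 := S5aux.B_one hrk' hB' (by rw [hrank']; omega)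
  have hBne : ∀ k ≤ 2 * m + 2, (B k : ℚ) ≠ 0 := fun k hk => by
    have := S5aux.Bk_pos hrk hB k (by rw [hrank]; omega)
    positivity
  have hBne' : ∀ k ≤ 2 * m + 2, (B' k : ℚ) ≠ 0 := fun k hk => by
    have := S5aux.Bk_pos hrk' hB' k (by rw [hrank']; omega)
    positivity
  have hsum := S5aux.euler_alt_sum hrk hB hE (by rw [hrank]; omega)
  have hsum' := S5aux.euler_alt_sum hrk' hB' hE' (by rw [hrank']; omega)
  rw [hrank] at hsum
  rw [hrank'] at hsum'
  -- agreement of B up to 2m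
  have hagree' : ∀ k, k ≤ 2 * m → (B k : ℚ) = (B' k : ℚ) := by
    intro k
    induction k with
    | zero => intro _; rw [hB0, hB0']
    | succ j ih =>
      intro hk
      have hj : j ≤ 2 * m := by omega
      have h := hagree (j + 1) hk
      simp only [Nat.add_sub_cancel] at h
      have hBj := hBne j (by omega)
      have hB'j := hBne' j (by omega)
      rw [← ih hj] at h
      have := (div_eq_div_iff hBj hBj).mp h
      exact mul_right_cancel₀ hBj this
  -- peel the Euler sums
  rw [show 2 * m + 2 + 1 = (2 * m - 1) + 4 by omega] at hsum hsum'
  rw [S5aux.peel] at hsum hsum'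
  rw [show (2 * m - 1) + 2 = 2 * m + 1 by omega,
      show (2 * m - 1) + 3 = 2 * m + 2 by omega] at hsum hsum'
  simp only [show 2 * m + 2 - 0 = 2 * m + 2 by omega,
    show 2 * m + 2 - 1 = 2 * m + 1 by omega,
    show 2 * m + 2 - (2 * m + 1) = 1 by omega,
    Nat.sub_self, pow_zero, pow_one, hB0, hB1, hB0', hB1', Nat.cast_one,
    one_mul, mul_one] at hsum hsum'
  rw [Odd.neg_one_pow ⟨m, by ring⟩, Even.neg_one_pow ⟨m + 1, by ring⟩] at hsum hsum'
  -- middle sums agree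
  have hmid : ∑ i ∈ Finset.range (2 * m - 1),
      (-1 : ℚ) ^ (i + 2) / ((B (i + 2) : ℚ) * (B (2 * m + 2 - (i + 2)) : ℚ)) =
      ∑ i ∈ Finset.range (2 * m - 1),
      (-1 : ℚ) ^ (i + 2) / ((B' (i + 2) : ℚ) * (B' (2 * m + 2 - (i + 2)) : ℚ)) := by
    refine Finset.sum_congr rfl (fun i hi => ?_)
    rw [Finset.mem_range] at hi
    rw [hagree' (i + 2) (by omega), hagree' (2 * m + 2 - (i + 2)) (by omega)]
  have hb1 := hBne (2 * m + 1) (by omega)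
  have hb2 := hBne (2 * m + 2) le_rfl
  have hb1' := hBne' (2 * m + 1) (by omega)
  have hb2' := hBne' (2 * m + 2) le_rfl
  have key : 1 / (B (2 * m + 1) : ℚ) - 1 / (B (2 * m + 2) : ℚ) =
      1 / (B' (2 * m + 1) : ℚ) - 1 / (B' (2 * m + 2) : ℚ) := by
    linear_combination (-1 / 2 : ℚ) * hsum + (1 / 2 : ℚ) * hsum' + (1 / 2 : ℚ) * hmid
  have expand : ∀ (C D E : ℚ), D ≠ 0 → E ≠ 0 →
      (C / D) * (1 - D / E) = C * (1 / D - 1 / E) := by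
    intro C D E hD hE
    field_simp
  rw [expand _ _ _ hb1 hb2, expand _ _ _ hb1' hb2', hagree' (2 * m) le_rfl, key]
end

section
/- Every finite Eulerian binomial poset of rank 4 is isomorphic to either the butterfly poset T_4 or the boolean lattice B_4. -/
open scoped Classical

set_option linter.unusedSectionVars false

section Chains
variable {α : Type*} [PartialOrder α]

lemma chain_head_le_last : ∀ (l : List α), l.Chain' (· ⋖ ·) → ∀ x y : α,
    l.head? = some x → l.getLast? = some y → x ≤ y
  | [], _, x, y, hx, _ => by simp at hx
  | [a], _, x, y, hx, hy => by
      simp at hx hy; subst hx; subst hy; rfl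
  | a :: b :: t, hc, x, y, hx, hy => by
      simp only [List.Chain'] at *; rw [List.isChain_cons_cons] at hc
      simp only [List.head?_cons, Option.some.injEq] at hx
      rw [List.getLast?_cons_cons] at hy
      have hby : b ≤ y := chain_head_le_last (b :: t) hc.2 b y rfl hy
      exact hx ▸ (hc.1.le.trans hby)

lemma satChain_self_eq {x : α} : ∀ {l : List α}, IsSatChain x x l → l = [x]
  | [], h => by simp [IsSatChain] at h
  | [a], h => by
      obtain ⟨-, h2, -⟩ := h; simp_all
  | a :: b :: t, h => by
      obtain ⟨h1, h2, h3⟩ := h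
      simp only [List.head?_cons, Option.some.injEq] at h2
      rw [List.getLast?_cons_cons] at h3
      simp only [List.Chain'] at *; rw [List.isChain_cons_cons] at h1
      have : b ≤ x := chain_head_le_last (b :: t) h1.2 b x rfl h3
      subst h2
      exact absurd (lt_of_lt_of_le h1.1.lt this) (lt_irrefl _)

lemma isSatChain_self (x : α) : IsSatChain x x [x] :=
  ⟨List.isChain_singleton x, rfl, rfl⟩

lemma chainCount_self (x : α) : chainCount x x = 1 := by
  have : Unique {l : List α // IsSatChain x x l} :=
    ⟨⟨⟨[x], isSatChain_self x⟩⟩, fun l => Subtype.ext (satChain_self_eq l.2)⟩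
  exact Nat.card_unique

lemma finite_satChains [Fintype α] (x y : α) : Finite {l : List α // IsSatChain x y l} := by
  haveI : IsAntisymm α (· < ·) := ⟨fun a b h1 h2 => absurd h2 (asymm h1)⟩
  apply Finite.of_injective (fun l => (l.1.toFinset : Finset α))
  rintro ⟨l, hl⟩ ⟨l', hl'⟩ h
  simp only [Subtype.mk.injEq] at h ⊢
  have pl : l.Pairwise (· < ·) := List.isChain_iff_pairwise.1 (hl.1.imp fun _ _ h => h.lt)
  have pl' : l'.Pairwise (· < ·) := List.isChain_iff_pairwise.1 (hl'.1.imp fun _ _ h => h.lt)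
  have nl : l.Nodup := pl.imp fun h => ne_of_lt h
  have nl' : l'.Nodup := pl'.imp fun h => ne_of_lt h
  have hperm : l.Perm l' := by
    rw [List.perm_iff_count]
    intro a
    have hcnt : ∀ m : List α, m.Nodup → m.count a = if a ∈ m then 1 else 0 := by
      intro m hm
      split_ifs with hma
      · exact List.count_eq_one_of_mem hm hma
      · exact List.count_eq_zero_of_not_mem hma
    rw [hcnt l nl, hcnt l' nl']
    have : a ∈ l ↔ a ∈ l' := by
      rw [← List.mem_toFinset, ← List.mem_toFinset, h]
    by_cases ha : a ∈ l
    · simp [ha, this.mp ha]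
    · have ha' : a ∉ l' := fun h' => ha (this.mpr h')
      simp [ha, ha']
  exact hperm.eq_of_pairwise' pl pl'
end Chains

section Decomp
variable {α : Type*} [PartialOrder α] [Fintype α]

lemma nat_card_sigma {ι : Type*} [Fintype ι] (T : ι → Type*) [∀ i, Finite (T i)] :
    Nat.card ((i : ι) × T i) = ∑ i, Nat.card (T i) := by
  letI : ∀ i, Fintype (T i) := fun i => Fintype.ofFinite _
  simp only [Nat.card_eq_fintype_card, Fintype.card_sigma]

lemma isSatChain_cons {x y z : α} {t : List α} (hxz : x ⋖ z) (ht : IsSatChain z y t) :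
    IsSatChain x y (x :: t) := by
  obtain ⟨h1, h2, h3⟩ := ht
  cases t with
  | nil => simp at h2
  | cons c r =>
    simp only [List.head?_cons, Option.some.injEq] at h2
    subst h2
    exact ⟨List.isChain_cons_cons.2 ⟨hxz, h1⟩, rfl, by rwa [List.getLast?_cons_cons]⟩

/-- decomposition at the bottom -/
lemma chainCount_eq_sum_atoms {x y : α} (hxy : x < y) :
    chainCount x y = ∑ z ∈ Finset.univ.filter (fun z => x ⋖ z ∧ z ≤ y), chainCount z y := by
  classical
  haveI : ∀ z : α, Finite {t : List α // IsSatChain z y t} := fun z => finite_satChains z y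
  let f : ((z : {z : α // x ⋖ z ∧ z ≤ y}) × {t : List α // IsSatChain z.1 y t}) →
      {l : List α // IsSatChain x y l} := fun p => ⟨x :: p.2.1, isSatChain_cons p.1.2.1 p.2.2⟩
  have hbij : Function.Bijective f := by
    constructor
    · rintro ⟨⟨z, hz⟩, ⟨t, ht⟩⟩ ⟨⟨z', hz'⟩, ⟨t', ht'⟩⟩ hEq
      have h' : (x :: t : List α) = x :: t' := congrArg Subtype.val hEq
      have htt : t = t' := by injection h'
      subst htt
      have hzz : z = z' := by
        have h4 := ht.2.1.symm.trans ht'.2.1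
        injection h4
      subst hzz; rfl
    · rintro ⟨l, hl⟩
      obtain ⟨h1, h2, h3⟩ := hl
      cases l with
      | nil => simp at h2
      | cons a t =>
        simp only [List.head?_cons, Option.some.injEq] at h2
        subst h2
        cases t with
        | nil =>
          simp only [List.getLast?_singleton, Option.some.injEq] at h3
          exact absurd h3 (ne_of_lt hxy)
        | cons z r =>
          rw [List.getLast?_cons_cons] at h3
          simp only [List.Chain'] at h1; rw [List.isChain_cons_cons] at h1
          have hchain : IsSatChain z y (z :: r) := ⟨h1.2, rfl, h3⟩
          have hzy : z ≤ y := chain_head_le_last (z :: r) h1.2 z y rfl h3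
          exact ⟨⟨⟨z, h1.1, hzy⟩, ⟨z :: r, hchain⟩⟩, Subtype.ext rfl⟩
  have hcard := Nat.card_congr (Equiv.ofBijective f hbij)
  rw [chainCount, ← hcard, nat_card_sigma]
  exact (Finset.sum_subtype _ (fun z => by simp) (fun z => chainCount z y)).symm

omit [Fintype α] in
lemma isSatChain_concat {x w y : α} {t : List α} (hwy : w ⋖ y) (ht : IsSatChain x w t) :
    IsSatChain x y (t ++ [y]) := by
  obtain ⟨h1, h2, h3⟩ := ht
  have htne : t ≠ [] := by intro h0; rw [h0] at h2; simp at h2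
  refine ⟨List.isChain_append.2 ⟨h1, List.isChain_singleton y, ?_⟩,
    by rw [List.head?_append_of_ne_nil _ htne]; exact h2, List.getLast?_concat⟩
  intro a ha b hb
  simp only [List.head?_cons, Option.mem_def, Option.some.injEq] at hb
  rw [Option.mem_def, h3, Option.some.injEq] at ha
  subst ha; subst hb; exact hwy

/-- decomposition at the top -/
lemma chainCount_eq_sum_coatoms {x y : α} (hxy : x < y) :
    chainCount x y = ∑ w ∈ Finset.univ.filter (fun w => w ⋖ y ∧ x ≤ w), chainCount x w := by
  classical
  haveI : ∀ w : α, Finite {t : List α // IsSatChain x w t} := fun w => finite_satChains x w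
  let f : ((w : {w : α // w ⋖ y ∧ x ≤ w}) × {t : List α // IsSatChain x w.1 t}) →
      {l : List α // IsSatChain x y l} := fun p => ⟨p.2.1 ++ [y], isSatChain_concat p.1.2.1 p.2.2⟩
  have hbij : Function.Bijective f := by
    constructor
    · rintro ⟨⟨w, hw⟩, ⟨t, ht⟩⟩ ⟨⟨w', hw'⟩, ⟨t', ht'⟩⟩ hEq
      have h' : (t ++ [y] : List α) = t' ++ [y] := congrArg Subtype.val hEq
      have htt : t = t' := by
        have := congrArg List.dropLast h'
        simpa using this
      subst htt
      have hww : w = w' := by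
        have h4 := ht.2.2.symm.trans ht'.2.2
        injection h4
      subst hww; rfl
    · rintro ⟨l, hl⟩
      obtain ⟨h1, h2, h3⟩ := hl
      have hne : l ≠ [] := by intro h0; rw [h0] at h2; simp at h2
      have hlast : l.getLast hne = y := by
        rw [List.getLast?_eq_getLast hne, Option.some.injEq] at h3; exact h3
      have hdec : l.dropLast ++ [y] = l := by
        conv_lhs => rw [← hlast]
        exact List.dropLast_append_getLast hne
      have htne : l.dropLast ≠ [] := by
        intro h0
        rw [h0, List.nil_append] at hdec
        rw [← hdec] at h2
        simp only [List.head?_cons, Option.some.injEq] at h2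
        exact (ne_of_lt hxy) (h2.symm ▸ rfl)
      rw [← hdec] at h1 h2
      simp only [List.Chain'] at h1; rw [List.isChain_append] at h1
      obtain ⟨hc1, -, hrel⟩ := h1
      have hw : l.dropLast.getLast? = some (l.dropLast.getLast htne) :=
        List.getLast?_eq_getLast htne
      set w := l.dropLast.getLast htne with hwdef
      have hcov : w ⋖ y := hrel w (Option.mem_def.2 hw) y rfl
      have hhead : l.dropLast.head? = some x := by
        rwa [List.head?_append_of_ne_nil _ htne] at h2
      have hxw : x ≤ w := chain_head_le_last _ hc1 x w hhead hw
      exact ⟨⟨⟨w, hcov, hxw⟩, ⟨l.dropLast, ⟨hc1, hhead, hw⟩⟩⟩, Subtype.ext hdec⟩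
  have hcard := Nat.card_congr (Equiv.ofBijective f hbij)
  rw [chainCount, ← hcard, nat_card_sigma]
  exact (Finset.sum_subtype _ (fun z => by simp) (fun w => chainCount x w)).symm

end Decomp

section Ranks
variable {α : Type*} [Fintype α] [PartialOrder α] [OrderBot α] {rk : α → ℕ}

lemma exists_cover_of_lt {x y : α} (hxy : x < y) : ∃ z, x ⋖ z ∧ z ≤ y := by
  classical
  have hne : (Finset.univ.filter fun z => x < z ∧ z ≤ y).Nonempty :=
    ⟨y, by simp [hxy]⟩
  obtain ⟨m, hm, hmin'⟩ := Finset.exists_minimal hne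
  have hmin : ∀ c ∈ (Finset.univ.filter fun z => x < z ∧ z ≤ y), ¬ c < m :=
    fun c hc hcm => hcm.not_ge (hmin' hc hcm.le)
  simp only [Finset.mem_filter, Finset.mem_univ, true_and] at hm
  refine ⟨m, ⟨hm.1, fun c hxc hcm => ?_⟩, hm.2⟩
  exact hmin c (by simp [hxc, le_trans hcm.le hm.2]) hcm

lemma rk_le_of_le (hrk : IsRankFunction rk) : ∀ {x y : α}, x ≤ y → rk x ≤ rk y := by
  intro x
  induction x using WellFoundedGT.induction with
  | _ x ih =>
    intro y hxy
    rcases eq_or_lt_of_le hxy with rfl | hlt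
    · exact le_rfl
    · obtain ⟨z, hz, hzy⟩ := exists_cover_of_lt hlt
      have := hrk.2 x z hz
      have h2 : rk z ≤ rk y := ih z hz.lt hzy
      omega

lemma rk_lt_of_lt (hrk : IsRankFunction rk) {x y : α} (h : x < y) : rk x < rk y := by
  obtain ⟨z, hz, hzy⟩ := exists_cover_of_lt h
  have h1 := hrk.2 x z hz
  have h2 := rk_le_of_le hrk hzy
  omega

lemma eq_of_le_of_rk_le (hrk : IsRankFunction rk) {x y : α} (h : x ≤ y)
    (h2 : rk y ≤ rk x) : x = y := by
  rcases eq_or_lt_of_le h with rfl | hlt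
  · rfl
  · exact absurd (rk_lt_of_lt hrk hlt) (by omega)

lemma covBy_iff_rk (hrk : IsRankFunction rk) {x y : α} :
    x ⋖ y ↔ x < y ∧ rk y = rk x + 1 := by
  constructor
  · exact fun h => ⟨h.lt, hrk.2 x y h⟩
  · rintro ⟨h1, h2⟩
    refine ⟨h1, fun c hxc hcy => ?_⟩
    have := rk_lt_of_lt hrk hxc
    have := rk_lt_of_lt hrk hcy
    omega

lemma rk_eq_zero_iff (hrk : IsRankFunction rk) {x : α} : rk x = 0 ↔ x = ⊥ := by
  constructor
  · intro h
    rcases eq_or_lt_of_le (bot_le (a := x)) with h2 | h2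
    · exact h2.symm
    · have := rk_lt_of_lt hrk h2
      rw [hrk.1] at this; omega
  · rintro rfl; exact hrk.1

lemma exists_satChain (hrk : IsRankFunction rk) :
    ∀ n (x y : α), x ≤ y → rk y - rk x = n → Nonempty {l : List α // IsSatChain x y l} := by
  intro n
  induction n using Nat.strong_induction_on with
  | _ n ih =>
    intro x y hxy hn
    rcases eq_or_lt_of_le hxy with rfl | hlt
    · exact ⟨⟨[x], isSatChain_self x⟩⟩
    · obtain ⟨z, hz, hzy⟩ := exists_cover_of_lt hlt
      have h1 := hrk.2 x z hz
      have h2 := rk_le_of_le hrk hzy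
      have h3 := rk_lt_of_lt hrk hlt
      obtain ⟨⟨t, ht⟩⟩ := ih (rk y - rk z) (by omega) z y hzy rfl
      exact ⟨⟨x :: t, isSatChain_cons hz ht⟩⟩

lemma chainCount_pos (hrk : IsRankFunction rk) {x y : α} (hxy : x ≤ y) :
    0 < chainCount x y := by
  haveI := finite_satChains x y
  haveI := (exists_satChain hrk _ x y hxy rfl)
  exact Nat.card_pos

end Ranks



section Counting
variable {α : Type*} [Fintype α] [PartialOrder α] [OrderBot α] {rk : α → ℕ} {B : ℕ → ℕ}

lemma interval_tri (hrk : IsRankFunction rk) {x y : α} (hxy : x < y) (h2 : rk y = rk x + 2) :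
    ∀ z : α, (x ≤ z ∧ z ≤ y) ↔ (z = x ∨ z = y ∨ (x < z ∧ z < y)) := by
  intro z
  constructor
  · rintro ⟨h1, h3⟩
    rcases eq_or_lt_of_le h1 with rfl | h1'
    · exact Or.inl rfl
    rcases eq_or_lt_of_le h3 with rfl | h3'
    · exact Or.inr (Or.inl rfl)
    exact Or.inr (Or.inr ⟨h1', h3'⟩)
  · rintro (rfl | rfl | ⟨ha, hb⟩)
    · exact ⟨le_refl _, hxy.le⟩
    · exact ⟨hxy.le, le_refl _⟩
    · exact ⟨ha.le, hb.le⟩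

lemma mid_rk (hrk : IsRankFunction rk) {x y z : α} (h2 : rk y = rk x + 2)
    (ha : x < z) (hb : z < y) : rk z = rk x + 1 := by
  have := rk_lt_of_lt hrk ha
  have := rk_lt_of_lt hrk hb
  omega

/-- a rank-2 interval has exactly two middle elements -/
lemma card_middles (hrk : IsRankFunction rk) (hE : IsEulerian rk) {x y : α}
    (hxy : x < y) (h2 : rk y = rk x + 2) :
    (Finset.univ.filter fun z => x < z ∧ z < y).card = 2 := by
  classical
  have hEP := hE x y hxy
  have hxne : x ≠ y := ne_of_lt hxy
  have hpair : ({x, y} : Finset α).card = 2 := Finset.card_pair hxne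
  have tri := interval_tri hrk hxy h2
  rcases Nat.even_or_odd (rk x) with hpar | hpar
  · have e1 : (Finset.univ.filter fun z => x ≤ z ∧ z ≤ y ∧ Even (rk z)) = {x, y} := by
      ext z
      simp only [Finset.mem_filter, Finset.mem_univ, true_and, Finset.mem_insert,
        Finset.mem_singleton]
      constructor
      · rintro ⟨h1, h3, h4⟩
        rcases (tri z).1 ⟨h1, h3⟩ with rfl | rfl | ⟨ha, hb⟩
        · exact Or.inl rfl
        · exact Or.inr rfl
        · have hm := mid_rk hrk h2 ha hb
          rw [Nat.even_iff] at h4 hpar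
          omega
      · rintro (rfl | rfl)
        · exact ⟨le_refl _, hxy.le, hpar⟩
        · refine ⟨hxy.le, le_refl _, ?_⟩
          rw [Nat.even_iff] at hpar ⊢; omega
    have e2 : (Finset.univ.filter fun z => x ≤ z ∧ z ≤ y ∧ ¬ Even (rk z)) =
        (Finset.univ.filter fun z => x < z ∧ z < y) := by
      ext z
      simp only [Finset.mem_filter, Finset.mem_univ, true_and]
      constructor
      · rintro ⟨h1, h3, h4⟩
        rcases (tri z).1 ⟨h1, h3⟩ with rfl | rfl | ⟨ha, hb⟩
        · exact absurd hpar h4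
        · exfalso; apply h4; rw [Nat.even_iff] at hpar ⊢; omega
        · exact ⟨ha, hb⟩
      · rintro ⟨ha, hb⟩
        have hm := mid_rk hrk h2 ha hb
        refine ⟨ha.le, hb.le, ?_⟩
        rw [Nat.even_iff] at hpar ⊢; omega
    rw [EulerPoincare, e1, e2, hpair] at hEP
    omega
  · rw [Nat.odd_iff] at hpar
    have e1 : (Finset.univ.filter fun z => x ≤ z ∧ z ≤ y ∧ ¬ Even (rk z)) = {x, y} := by
      ext z
      simp only [Finset.mem_filter, Finset.mem_univ, true_and, Finset.mem_insert,
        Finset.mem_singleton]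
      constructor
      · rintro ⟨h1, h3, h4⟩
        rcases (tri z).1 ⟨h1, h3⟩ with rfl | rfl | ⟨ha, hb⟩
        · exact Or.inl rfl
        · exact Or.inr rfl
        · have hm := mid_rk hrk h2 ha hb
          rw [Nat.even_iff] at h4
          omega
      · rintro (rfl | rfl)
        · exact ⟨le_refl _, hxy.le, by rw [Nat.even_iff]; omega⟩
        · exact ⟨hxy.le, le_refl _, by rw [Nat.even_iff]; omega⟩
    have e2 : (Finset.univ.filter fun z => x ≤ z ∧ z ≤ y ∧ Even (rk z)) =
        (Finset.univ.filter fun z => x < z ∧ z < y) := by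
      ext z
      simp only [Finset.mem_filter, Finset.mem_univ, true_and]
      constructor
      · rintro ⟨h1, h3, h4⟩
        rcases (tri z).1 ⟨h1, h3⟩ with rfl | rfl | ⟨ha, hb⟩
        · rw [Nat.even_iff] at h4; omega
        · rw [Nat.even_iff] at h4; omega
        · exact ⟨ha, hb⟩
      · rintro ⟨ha, hb⟩
        have hm := mid_rk hrk h2 ha hb
        exact ⟨ha.le, hb.le, by rw [Nat.even_iff]; omega⟩
    rw [EulerPoincare, e1, e2, hpair] at hEP
    omega

/-- the factorial recursion via atoms -/
lemma B_eq_atoms_mul (hrk : IsRankFunction rk) (hB : IsBinomial rk B) {x y : α} (hxy : x < y) :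
    B (rk y - rk x) =
      (Finset.univ.filter fun z => x ⋖ z ∧ z ≤ y).card * B (rk y - rk x - 1) := by
  classical
  rw [← hB x y hxy.le, chainCount_eq_sum_atoms hxy]
  rw [Finset.sum_congr rfl (fun z hz => ?_), Finset.sum_const, smul_eq_mul]
  simp only [Finset.mem_filter, Finset.mem_univ, true_and] at hz
  rw [hB z y hz.2]
  congr 1
  have h1 := hrk.2 x z hz.1
  have h2 := rk_le_of_le hrk hz.2
  omega

/-- the factorial recursion via coatoms -/
lemma B_eq_coatoms_mul (hrk : IsRankFunction rk) (hB : IsBinomial rk B) {x y : α} (hxy : x < y) :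
    B (rk y - rk x) =
      (Finset.univ.filter fun w => w ⋖ y ∧ x ≤ w).card * B (rk y - rk x - 1) := by
  classical
  rw [← hB x y hxy.le, chainCount_eq_sum_coatoms hxy]
  rw [Finset.sum_congr rfl (fun w hw => ?_), Finset.sum_const, smul_eq_mul]
  simp only [Finset.mem_filter, Finset.mem_univ, true_and] at hw
  rw [hB x w hw.2]
  congr 1
  have h1 := hrk.2 w y hw.1
  have h2 := rk_le_of_le hrk hw.2
  have h3 := rk_lt_of_lt hrk hxy
  omega

end Counting


section Counting2
variable {α : Type*} [Fintype α] [PartialOrder α] [OrderBot α] {rk : α → ℕ} {B : ℕ → ℕ}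

lemma card_above_mul (hrk : IsRankFunction rk) (hB : IsBinomial rk B) {x y : α} (hxy : x < y) :
    B (rk y - rk x) =
      (Finset.univ.filter fun z => x < z ∧ z ≤ y ∧ rk z = rk x + 1).card *
        B (rk y - rk x - 1) := by
  classical
  rw [B_eq_atoms_mul hrk hB hxy]
  congr 2
  ext z
  simp only [Finset.mem_filter, Finset.mem_univ, true_and, covBy_iff_rk hrk]
  tauto

lemma card_below_mul (hrk : IsRankFunction rk) (hB : IsBinomial rk B) {x y : α} (hxy : x < y) :
    B (rk y - rk x) =
      (Finset.univ.filter fun w => x ≤ w ∧ w < y ∧ rk y = rk w + 1).card *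
        B (rk y - rk x - 1) := by
  classical
  rw [B_eq_coatoms_mul hrk hB hxy]
  congr 2
  ext w
  simp only [Finset.mem_filter, Finset.mem_univ, true_and, covBy_iff_rk hrk]
  tauto

lemma card_above_rank2 (hrk : IsRankFunction rk) (hE : IsEulerian rk) {x y : α}
    (hxy : x < y) (h2 : rk y = rk x + 2) :
    (Finset.univ.filter fun z => x < z ∧ z ≤ y ∧ rk z = rk x + 1).card = 2 := by
  classical
  rw [← card_middles hrk hE hxy h2]
  congr 1
  ext z
  simp only [Finset.mem_filter, Finset.mem_univ, true_and]
  constructor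
  · rintro ⟨h1, h3, h4⟩
    refine ⟨h1, lt_of_le_of_ne h3 ?_⟩
    intro h; subst h; omega
  · rintro ⟨h1, h3⟩
    exact ⟨h1, h3.le, mid_rk hrk h2 h1 h3⟩

end Counting2

/-- Every finite Eulerian binomial poset of rank `4` is isomorphic to the
butterfly poset `T 4` or to the boolean lattice `B_4`. -/
theorem statement6 {α : Type*} [Fintype α] [PartialOrder α] [BoundedOrder α]
    (rk : α → ℕ) (B : ℕ → ℕ) (hrk : IsRankFunction rk) (hB : IsBinomial rk B)
    (hE : IsEulerian rk) (hrank : rk ⊤ = 4) :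
    Nonempty (α ≃o Butterfly 4) ∨ Nonempty (α ≃o Finset (Fin 4)) := by
  classical
  have hbt : rk (⊥ : α) = 0 := hrk.1
  have hne : (⊥ : α) ≠ ⊤ := fun h => by rw [← h, hbt] at hrank; omega
  have hbot_lt_top : (⊥ : α) < ⊤ := lt_of_le_of_ne bot_le hne
  have hle4 : ∀ x : α, rk x ≤ 4 := fun x => hrank ▸ rk_le_of_le hrk le_top
  have heq_top : ∀ x : α, rk x = 4 → x = ⊤ := fun x h =>
    eq_of_le_of_rk_le hrk le_top (by omega)
  have heq_bot : ∀ x : α, rk x = 0 → x = ⊥ := fun x h => (rk_eq_zero_iff hrk).1 h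
  set L : ℕ → Finset α := fun k => Finset.univ.filter (fun z => rk z = k) with hLdef
  have hmemL : ∀ k (z : α), z ∈ L k ↔ rk z = k := fun k z => by
    simp [hLdef]
  -- elements of each rank
  obtain ⟨z1, hz1c, hz1t⟩ := exists_cover_of_lt hbot_lt_top
  have hz1 : rk z1 = 1 := by rw [hrk.2 _ _ hz1c, hbt]
  have hz1lt : z1 < ⊤ := lt_of_le_of_ne hz1t (fun h => by rw [h, hrank] at hz1; omega)
  obtain ⟨z2, hz2c, hz2t⟩ := exists_cover_of_lt hz1lt
  have hz2 : rk z2 = 2 := by rw [hrk.2 _ _ hz2c, hz1]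
  have hz2lt : z2 < ⊤ := lt_of_le_of_ne hz2t (fun h => by rw [h, hrank] at hz2; omega)
  obtain ⟨z3, hz3c, hz3t⟩ := exists_cover_of_lt hz2lt
  have hz3 : rk z3 = 3 := by rw [hrk.2 _ _ hz3c, hz2]
  -- values of B
  have hB0 : B 0 = 1 := by
    have h := (hB ⊥ ⊥ le_rfl).symm
    rwa [chainCount_self, Nat.sub_self] at h
  have hB1 : B 1 = 1 := by
    have h := card_above_mul hrk hB (hz1c.lt)
    rw [hbt, hz1] at h
    norm_num [hB0] at h
    have hfil : (Finset.univ.filter fun z : α => ⊥ < z ∧ z ≤ z1 ∧ rk z = 0 + 1) = {z1} := by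
      ext z
      simp only [Finset.mem_filter, Finset.mem_univ, true_and, Finset.mem_singleton]
      constructor
      · rintro ⟨h1, h2, h3⟩
        exact eq_of_le_of_rk_le hrk h2 (by omega)
      · rintro rfl
        exact ⟨hz1c.lt, le_rfl, by omega⟩
    rw [hfil, Finset.card_singleton] at h
    omega
  have hB2 : B 2 = 2 := by
    have hlt : (⊥ : α) < z2 := lt_of_le_of_ne bot_le (fun h => by rw [← h, hbt] at hz2; omega)
    have h := card_above_mul hrk hB hlt
    have hc := card_above_rank2 hrk hE hlt (by omega)
    rw [hbt] at hc
    rw [hbt, hz2, hc] at h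
    norm_num [hB1] at h
    exact h
  have hB3pos : 0 < B 3 := by
    have h := chainCount_pos hrk (le_top : z1 ≤ ⊤)
    rwa [hB z1 ⊤ le_top, hrank, hz1] at h
  -- per-element counts at ranks 1 and 2
  have hcnt3 : ∀ z : α, rk z = 1 → B 3 = ((L 2).filter (z < ·)).card * 2 := by
    intro z hz
    have hlt : z < ⊤ := lt_of_le_of_ne le_top (fun h => by rw [h, hrank] at hz; omega)
    have h := card_above_mul hrk hB hlt
    rw [hrank, hz] at h
    have hfil : (Finset.univ.filter fun w : α => z < w ∧ w ≤ ⊤ ∧ rk w = 1 + 1) =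
        (L 2).filter (z < ·) := by
      ext w
      simp only [Finset.mem_filter, Finset.mem_univ, true_and, hmemL, le_top, true_and,
        Finset.mem_filter, hLdef]
      tauto
    rw [hfil] at h
    norm_num [hB2] at h
    exact h
  have hcnt_below2 : ∀ w : α, rk w = 2 → ((L 1).filter (· < w)).card = 2 := by
    intro w hw
    have hlt : (⊥ : α) < w := lt_of_le_of_ne bot_le (fun h => by rw [← h, hbt] at hw; omega)
    have h := card_below_mul hrk hB hlt
    rw [hbt, hw] at h
    have hfil : (Finset.univ.filter fun v : α => ⊥ ≤ v ∧ v < w ∧ 2 = rk v + 1) =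
        (L 1).filter (· < w) := by
      ext v
      simp only [Finset.mem_filter, Finset.mem_univ, true_and, bot_le, true_and, hLdef]
      constructor
      · rintro ⟨h1, h2⟩; exact ⟨by omega, h1⟩
      · rintro ⟨h1, h2⟩; exact ⟨h2, by omega⟩
    rw [hfil] at h
    norm_num [hB1, hB2] at h
    omega
  -- atoms and coatoms of the whole poset
  have hE1 : B 4 = (L 1).card * B 3 := by
    have h := card_above_mul hrk hB hbot_lt_top
    rw [hbt, hrank] at h
    have hfil : (Finset.univ.filter fun z : α => ⊥ < z ∧ z ≤ ⊤ ∧ rk z = 0 + 1) = L 1 := by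
      ext z
      rw [Finset.mem_filter, hmemL]
      constructor
      · rintro ⟨-, -, -, h3⟩; omega
      · intro h1
        exact ⟨Finset.mem_univ z,
          lt_of_le_of_ne bot_le (fun h => by rw [← h, hbt] at h1; omega), le_top, by omega⟩
    rw [hfil] at h
    norm_num at h
    exact h
  have hE2 : B 4 = (L 3).card * B 3 := by
    have h := card_below_mul hrk hB hbot_lt_top
    rw [hbt, hrank] at h
    have hfil : (Finset.univ.filter fun w : α => ⊥ ≤ w ∧ w < ⊤ ∧ 4 = rk w + 1) = L 3 := by
      ext w
      rw [Finset.mem_filter, hmemL]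
      constructor
      · rintro ⟨-, -, -, h3⟩; omega
      · intro h1
        exact ⟨Finset.mem_univ w, bot_le,
          lt_of_le_of_ne le_top (fun h => by rw [h, hrank] at h1; omega), by omega⟩
    rw [hfil] at h
    norm_num at h
    exact h
  have hac : (L 1).card = (L 3).card :=
    Nat.eq_of_mul_eq_mul_right hB3pos (hE1.symm.trans hE2)
  have hL0 : L 0 = {⊥} := by
    ext z; rw [hmemL, Finset.mem_singleton]
    exact ⟨heq_bot z, fun h => h ▸ hbt⟩
  have hL4 : L 4 = {⊤} := by
    ext z; rw [hmemL, Finset.mem_singleton]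
    exact ⟨heq_top z, fun h => h ▸ hrank⟩
  -- Euler-Poincare for the whole poset
  have hEPw : 2 + (L 2).card = (L 1).card + (L 3).card := by
    have h := hE ⊥ ⊤ hbot_lt_top
    rw [EulerPoincare] at h
    have e1 : (Finset.univ.filter fun z : α => ⊥ ≤ z ∧ z ≤ ⊤ ∧ Even (rk z)) =
        (L 0 ∪ L 2) ∪ L 4 := by
      ext z
      have := hle4 z
      simp only [Finset.mem_filter, Finset.mem_univ, true_and, bot_le, le_top, true_and,
        Finset.mem_union, hLdef, Nat.even_iff]
      omega
    have e2 : (Finset.univ.filter fun z : α => ⊥ ≤ z ∧ z ≤ ⊤ ∧ ¬ Even (rk z)) =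
        L 1 ∪ L 3 := by
      ext z
      have := hle4 z
      simp only [Finset.mem_filter, Finset.mem_univ, true_and, bot_le, le_top, true_and,
        Finset.mem_union, hLdef, Nat.even_iff]
      omega
    have hd02 : Disjoint (L 0) (L 2) := by
      rw [Finset.disjoint_left]; intro z h1 h2; rw [hmemL] at h1 h2; omega
    have hd024 : Disjoint (L 0 ∪ L 2) (L 4) := by
      rw [Finset.disjoint_left]; intro z h1 h2
      rw [Finset.mem_union, hmemL, hmemL] at h1; rw [hmemL] at h2; omega
    have hd13 : Disjoint (L 1) (L 3) := by
      rw [Finset.disjoint_left]; intro z h1 h2; rw [hmemL] at h1 h2; omega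
    rw [e1, e2, Finset.card_union_of_disjoint hd024, Finset.card_union_of_disjoint hd02,
      Finset.card_union_of_disjoint hd13, hL0, hL4, Finset.card_singleton,
      Finset.card_singleton] at h
    omega
  -- double counting between ranks 1 and 2
  have hdc : (L 1).card * B 3 = 4 * (L 2).card := by
    have hswap : ∑ z ∈ L 1, ((L 2).filter (z < ·)).card =
        ∑ w ∈ L 2, ((L 1).filter (· < w)).card := by
      simp only [Finset.card_filter]
      rw [Finset.sum_comm]
    have h1 : ∑ z ∈ L 1, (((L 2).filter (z < ·)).card * 2) = (L 1).card * B 3 := by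
      rw [Finset.sum_congr rfl (fun z hz => (hcnt3 z ((hmemL 1 z).1 hz)).symm),
        Finset.sum_const, smul_eq_mul]
    have h2 : ∑ w ∈ L 2, ((L 1).filter (· < w)).card = 2 * (L 2).card := by
      rw [Finset.sum_congr rfl (fun w hw => hcnt_below2 w ((hmemL 2 w).1 hw)),
        Finset.sum_const, smul_eq_mul]
      ring
    have : ∑ z ∈ L 1, (((L 2).filter (z < ·)).card * 2) =
        (∑ z ∈ L 1, ((L 2).filter (z < ·)).card) * 2 := by
      rw [Finset.sum_mul]
    rw [this, hswap, h2] at h1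
    omega
  have ha2 : 2 ≤ (L 1).card := by
    have h := hcnt_below2 z2 hz2
    have hsub : ((L 1).filter (· < z2)) ⊆ L 1 := Finset.filter_subset _ _
    have := Finset.card_le_card hsub
    omega
  -- case disjunction
  have hcase : (B 3 = 4 ∧ (L 1).card = 2) ∨ (B 3 = 6 ∧ (L 1).card = 4) := by
    have hB3u := hcnt3 z1 hz1
    set u := ((L 2).filter (z1 < ·)).card with hu
    have key : (L 1).card * B 3 = 8 * (L 1).card - 8 := by omega
    have hlt8 : B 3 < 8 := by
      by_contra hge
      push_neg at hge
      have : (L 1).card * 8 ≤ (L 1).card * B 3 := Nat.mul_le_mul_left _ hge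
      omega
    have hucase : u = 1 ∨ u = 2 ∨ u = 3 := by omega
    rcases hucase with h | h | h <;> rw [h] at hB3u <;> norm_num at hB3u <;>
      rw [hB3u] at key <;> omega
  -- each rank-2 element is below exactly two rank-3 elements
  have hcnt_above2_3 : ∀ w : α, rk w = 2 → ((L 3).filter (w < ·)).card = 2 := by
    intro w hw
    have hlt : w < ⊤ := lt_of_le_of_ne le_top (fun h => by rw [h, hrank] at hw; omega)
    have hc := card_above_rank2 hrk hE hlt (by omega)
    rw [← hc]
    congr 1
    ext v
    simp only [Finset.mem_filter, Finset.mem_univ, true_and, hmemL]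
    constructor
    · rintro ⟨h1, h2⟩; exact ⟨h2, le_top, by omega⟩
    · rintro ⟨h1, -, h3⟩; exact ⟨by omega, h1⟩
  -- witnesses of every rank
  have hwit : ∀ k, k ≤ 4 → ∃ z : α, rk z = k := by
    intro k hk
    interval_cases k
    · exact ⟨⊥, hbt⟩
    · exact ⟨z1, hz1⟩
    · exact ⟨z2, hz2⟩
    · exact ⟨z3, hz3⟩
    · exact ⟨⊤, hrank⟩
  rcases hcase with ⟨hB3, ha⟩ | ⟨hB3, ha⟩
  · -- butterfly case
    left
    have hm2 : (L 2).card = 2 := by omega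
    have hc2 : (L 3).card = 2 := by omega
    have h12 : ∀ z w : α, rk z = 1 → rk w = 2 → z < w := by
      intro z w hz hw
      have h := hcnt3 z hz
      rw [hB3] at h
      have hsub : ((L 2).filter (z < ·)) ⊆ L 2 := Finset.filter_subset _ _
      have heqf : ((L 2).filter (z < ·)) = L 2 :=
        Finset.eq_of_subset_of_card_le hsub (by omega)
      have : w ∈ (L 2).filter (z < ·) := heqf.symm ▸ (hmemL 2 w).2 hw
      exact (Finset.mem_filter.1 this).2
    have h23 : ∀ w v : α, rk w = 2 → rk v = 3 → w < v := by
      intro w v hw hv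
      have h := hcnt_above2_3 w hw
      have hsub : ((L 3).filter (w < ·)) ⊆ L 3 := Finset.filter_subset _ _
      have heqf : ((L 3).filter (w < ·)) = L 3 :=
        Finset.eq_of_subset_of_card_le hsub (by omega)
      have : v ∈ (L 3).filter (w < ·) := heqf.symm ▸ (hmemL 3 v).2 hv
      exact (Finset.mem_filter.1 this).2
    have hstep : ∀ x y : α, rk y = rk x + 1 → x ≤ y := by
      intro x y hxy
      have h4 := hle4 x
      have h4' := hle4 y
      interval_cases hrx : rk x
      · rw [heq_bot x hrx]; exact bot_le
      · exact (h12 x y hrx (by omega)).le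
      · exact (h23 x y hrx (by omega)).le
      · rw [heq_top y (by omega)]; exact le_top
      · omega
    have hclimb : ∀ d (x y : α), rk y - rk x ≤ d → rk x < rk y → x ≤ y := by
      intro d
      induction d with
      | zero => intro x y h1 h2; omega
      | succ n ih =>
        intro x y h1 h2
        rcases eq_or_lt_of_le (show rk x + 1 ≤ rk y by omega) with heq | hlt
        · exact hstep x y heq.symm
        · obtain ⟨z, hz⟩ := hwit (rk x + 1) (by have := hle4 y; omega)
          exact (hstep x z hz).trans (ih z y (by omega) (by omega))
    have hchar : ∀ x y : α, x ≤ y ↔ x = y ∨ rk x < rk y := by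
      intro x y
      constructor
      · intro h
        rcases eq_or_lt_of_le h with rfl | hlt
        · exact Or.inl rfl
        · exact Or.inr (rk_lt_of_lt hrk hlt)
      · rintro (rfl | h)
        · exact le_rfl
        · exact hclimb 4 x y (by have := hle4 y; omega) h
    -- build the rank-preserving bijection
    have hcA : ∀ k, Fintype.card {a : α // rk a = k} = (L k).card := fun k =>
      Fintype.card_subtype _
    have hLk5 : ∀ k, (L (k + 5)).card = 0 := by
      intro k
      rw [Finset.card_eq_zero, hLdef]
      rw [Finset.filter_eq_empty_iff]
      intro z _
      have := hle4 z
      omega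
    have hcards : ∀ k, Fintype.card {a : α // rk a = k} =
        Fintype.card {p : Butterfly 4 // Butterfly.rk p = k} := by
      intro k
      match k with
      | 0 => rw [hcA, hL0]; simp; decide
      | 1 => rw [hcA]; rw [ha]; decide
      | 2 => rw [hcA, hm2]; decide
      | 3 => rw [hcA, hc2]; decide
      | 4 => rw [hcA, hL4]; simp; decide
      | (k + 5) =>
        rw [hcA, hLk5]
        symm
        rw [Fintype.card_eq_zero_iff]
        constructor
        rintro ⟨p, hp⟩
        have := p.1.1.isLt
        simp only [Butterfly.rk] at hp
        omega
    let e : α ≃ Butterfly 4 := Equiv.ofFiberEquiv (fun c => Fintype.equivOfCardEq (hcards c))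
    have hpres : ∀ a : α, Butterfly.rk (e a) = rk a := fun a => Equiv.ofFiberEquiv_map _ a
    have hble : ∀ p q : Butterfly 4, p ≤ q ↔ p = q ∨ ((p.1.1 : ℕ) < (q.1.1 : ℕ)) :=
      fun p q => Iff.rfl
    refine ⟨⟨e, ?_⟩⟩
    intro a b
    show e a ≤ e b ↔ a ≤ b
    rw [hble, hchar a b]
    have hra : ((e a).1.1 : ℕ) = rk a := hpres a
    have hrb : ((e b).1.1 : ℕ) = rk b := hpres b
    constructor
    · rintro (h | h)
      · exact Or.inl (e.injective h)
      · right; omega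
    · rintro (rfl | h)
      · exact Or.inl rfl
      · right; omega
  · -- boolean case
    right
    have hm6 : (L 2).card = 6 := by omega
    have hc4 : (L 3).card = 4 := by omega
    have hup2 : ∀ z : α, rk z = 1 → ((L 2).filter (z < ·)).card = 3 := by
      intro z hz
      have := hcnt3 z hz
      omega
    have hup3 : ∀ z : α, rk z = 1 → ((L 3).filter (z < ·)).card = 3 := by
      intro z hz
      have hlt : z < ⊤ := lt_of_le_of_ne le_top (fun h => by rw [h, hrank] at hz; omega)
      have h := card_below_mul hrk hB hlt
      rw [hrank, hz] at h
      have hfil : (Finset.univ.filter fun w : α => z ≤ w ∧ w < ⊤ ∧ 4 = rk w + 1) =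
          (L 3).filter (z < ·) := by
        ext w
        simp only [Finset.mem_filter, Finset.mem_univ, true_and, hmemL]
        constructor
        · rintro ⟨h1, h2, h3⟩
          exact ⟨by omega, lt_of_le_of_ne h1 (fun h => by subst h; omega)⟩
        · rintro ⟨h1, h2⟩
          exact ⟨h2.le, lt_of_le_of_ne le_top (fun h => by rw [h, hrank] at h1; omega), by omega⟩
      rw [hfil] at h
      norm_num [hB2, hB3] at h
      omega
    have hdown1_3 : ∀ c : α, rk c = 3 → ((L 1).filter (· < c)).card = 3 := by
      intro c hc
      have hlt : (⊥ : α) < c := lt_of_le_of_ne bot_le (fun h => by rw [← h, hbt] at hc; omega)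
      have h := card_above_mul hrk hB hlt
      rw [hbt, hc] at h
      have hfil : (Finset.univ.filter fun v : α => ⊥ < v ∧ v ≤ c ∧ rk v = 0 + 1) =
          (L 1).filter (· < c) := by
        ext v
        simp only [Finset.mem_filter, Finset.mem_univ, true_and, hmemL]
        constructor
        · rintro ⟨h1, h2, h3⟩
          exact ⟨by omega, lt_of_le_of_ne h2 (fun h => by subst h; omega)⟩
        · rintro ⟨h1, h2⟩
          exact ⟨lt_of_le_of_ne bot_le (fun h => by rw [← h, hbt] at h1; omega), h2.le, by omega⟩
      rw [hfil] at h
      norm_num [hB2, hB3] at h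
      omega
    have hdown2_3 : ∀ c : α, rk c = 3 → ((L 2).filter (· < c)).card = 3 := by
      intro c hc
      have hlt : (⊥ : α) < c := lt_of_le_of_ne bot_le (fun h => by rw [← h, hbt] at hc; omega)
      have h := card_below_mul hrk hB hlt
      rw [hbt, hc] at h
      have hfil : (Finset.univ.filter fun w : α => ⊥ ≤ w ∧ w < c ∧ 3 = rk w + 1) =
          (L 2).filter (· < c) := by
        ext w
        simp only [Finset.mem_filter, Finset.mem_univ, true_and, bot_le, true_and, hmemL]
        constructor
        · rintro ⟨h1, h2⟩
          exact ⟨by omega, h1⟩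
        · rintro ⟨h1, h2⟩
          exact ⟨h2, by omega⟩
      rw [hfil] at h
      norm_num [hB2, hB3] at h
      omega
    have hmid : ∀ z c : α, rk z = 1 → rk c = 3 → z < c →
        ((L 2).filter (fun w => z < w ∧ w < c)).card = 2 := by
      intro z c hz hc hzc
      have h := card_above_rank2 hrk hE hzc (by omega)
      rw [← h]
      congr 1
      ext w
      simp only [Finset.mem_filter, Finset.mem_univ, true_and, hmemL]
      constructor
      · rintro ⟨h1, h2, h3⟩
        exact ⟨h2, h3.le, by omega⟩
      · rintro ⟨h2, h3, h4⟩
        exact ⟨by omega, h2, lt_of_le_of_ne h3 (fun h => by subst h; omega)⟩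
    -- atoms below an element
    set supp : α → Finset α := fun x => (L 1).filter (· ≤ x) with hsuppdef
    have hsupp_mem : ∀ v x : α, v ∈ supp x ↔ rk v = 1 ∧ v ≤ x := by
      intro v x
      simp only [hsuppdef, Finset.mem_filter, hmemL]
    have hmono : ∀ x y : α, x ≤ y → supp x ⊆ supp y := by
      intro x y hxy v hv
      rw [hsupp_mem] at hv ⊢
      exact ⟨hv.1, hv.2.trans hxy⟩
    have hsupp1 : ∀ z : α, rk z = 1 → supp z = {z} := by
      intro z hz
      ext v
      rw [hsupp_mem, Finset.mem_singleton]
      constructor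
      · rintro ⟨h1, h2⟩
        exact eq_of_le_of_rk_le hrk h2 (by omega)
      · rintro rfl; exact ⟨hz, le_rfl⟩
    have hsupp_lt : ∀ v x : α, rk x ≠ 1 → (v ∈ supp x ↔ rk v = 1 ∧ v < x) := by
      intro v x hx
      rw [hsupp_mem]
      constructor
      · rintro ⟨h1, h2⟩
        exact ⟨h1, lt_of_le_of_ne h2 (fun h => by subst h; exact hx h1)⟩
      · rintro ⟨h1, h2⟩
        exact ⟨h1, h2.le⟩
    have hsupp_ltf : ∀ x : α, rk x ≠ 1 → supp x = (L 1).filter (· < x) := by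
      intro x hx
      ext v
      rw [hsupp_lt v x hx, Finset.mem_filter, hmemL]
    have hsc2 : ∀ w : α, rk w = 2 → (supp w).card = 2 := by
      intro w hw
      rw [hsupp_ltf w (by omega)]
      exact hcnt_below2 w hw
    have hsc3 : ∀ c : α, rk c = 3 → (supp c).card = 3 := by
      intro c hc
      rw [hsupp_ltf c (by omega)]
      exact hdown1_3 c hc
    have hsuppL1 : ∀ x : α, supp x ⊆ L 1 := fun x => Finset.filter_subset _ _
    -- level-2 injectivity of supp
    have hinj2 : ∀ w w' : α, rk w = 2 → rk w' = 2 → supp w = supp w' → w = w' := by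
      intro w w' hw hw' hs
      by_contra hne'
      obtain ⟨z, z', hzz', hpair⟩ := Finset.card_eq_two.1 (hsc2 w hw)
      have hzw : rk z = 1 ∧ z < w := by
        have := (hsupp_lt z w (by omega)).1 (by rw [hpair]; exact Finset.mem_insert_self _ _)
        exact this
      have hz'w : rk z' = 1 ∧ z' < w := by
        have := (hsupp_lt z' w (by omega)).1
          (by rw [hpair]; exact Finset.mem_insert_of_mem (Finset.mem_singleton_self _))
        exact this
      have hzw' : z < w' := by
        have := (hsupp_lt z w' (by omega)).1 (by rw [← hs, hpair]; exact Finset.mem_insert_self _ _)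
        exact this.2
      have hz'w' : z' < w' := by
        have := (hsupp_lt z' w' (by omega)).1
          (by rw [← hs, hpair]; exact Finset.mem_insert_of_mem (Finset.mem_singleton_self _))
        exact this.2
      set S := (L 3).filter (fun c => z < c ∧ z' < c) with hSdef
      have hTz : ((L 3).filter (z < ·)).card = 3 := hup3 z hzw.1
      have hTz' : ((L 3).filter (z' < ·)).card = 3 := hup3 z' hz'w.1
      have hzS : S ⊆ (L 3).filter (z < ·) := by
        intro c hc
        rw [hSdef, Finset.mem_filter] at hc
        exact Finset.mem_filter.2 ⟨hc.1, hc.2.1⟩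
      have hz'S : S ⊆ (L 3).filter (z' < ·) := by
        intro c hc
        rw [hSdef, Finset.mem_filter] at hc
        exact Finset.mem_filter.2 ⟨hc.1, hc.2.2⟩
      -- |S| ≥ 2
      have hSlow : 2 ≤ S.card := by
        have hsplit : ((L 3).filter (fun c => ¬ (z < c ∧ z' < c))).card =
            (L 3).card - S.card := by
          rw [hSdef, Finset.filter_not, Finset.card_sdiff_of_subset (Finset.filter_subset _ _)]
        have hng1 : ((L 3).filter (fun c => ¬ z < c)).card =
            (L 3).card - ((L 3).filter (fun c => z < c)).card := by
          rw [Finset.filter_not, Finset.card_sdiff_of_subset (Finset.filter_subset _ _)]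
        have hng2 : ((L 3).filter (fun c => ¬ z' < c)).card =
            (L 3).card - ((L 3).filter (fun c => z' < c)).card := by
          rw [Finset.filter_not, Finset.card_sdiff_of_subset (Finset.filter_subset _ _)]
        have hneg : (L 3).filter (fun c => ¬ (z < c ∧ z' < c)) ⊆
            ((L 3).filter (fun c => ¬ z < c)) ∪ ((L 3).filter (fun c => ¬ z' < c)) := by
          intro c hc
          have hc1 := Finset.mem_of_mem_filter c hc
          have hc2 := (Finset.mem_filter.1 hc).2
          by_cases h1 : z < c
          · exact Finset.mem_union_right _
              (Finset.mem_filter.2 ⟨hc1, fun h2 => hc2 ⟨h1, h2⟩⟩)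
          · exact Finset.mem_union_left _ (Finset.mem_filter.2 ⟨hc1, h1⟩)
        have h3 := Finset.card_le_card hneg
        have h4 := Finset.card_union_le ((L 3).filter (fun c => ¬ z < c))
          ((L 3).filter (fun c => ¬ z' < c))
        have hScard : S.card ≤ (L 3).card := Finset.card_le_card (hSdef ▸ Finset.filter_subset _ _)
        omega
      have hShigh : S.card ≤ 3 := hTz ▸ Finset.card_le_card hzS
      have hSne3 : S.card ≠ 3 := by
        intro h3
        have hSeq : S = (L 3).filter (z < ·) :=
          Finset.eq_of_subset_of_card_le hzS (by omega)
        have hSeq' : S = (L 3).filter (z' < ·) :=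
          Finset.eq_of_subset_of_card_le hz'S (by omega)
        have hSL3 : S ⊆ L 3 := hSdef ▸ Finset.filter_subset _ _
        have hsd : ((L 3) \ S).Nonempty := by
          rw [← Finset.card_pos, Finset.card_sdiff_of_subset hSL3]
          omega
        obtain ⟨c4, hc4m⟩ := hsd
        rw [Finset.mem_sdiff] at hc4m
        have hnz : ¬ z < c4 := by
          intro h
          exact hc4m.2 (hSeq ▸ Finset.mem_filter.2 ⟨hc4m.1, h⟩)
        have hnz' : ¬ z' < c4 := by
          intro h
          exact hc4m.2 (hSeq' ▸ Finset.mem_filter.2 ⟨hc4m.1, h⟩)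
        have hrkc4 : rk c4 = 3 := (hmemL 3 c4).1 hc4m.1
        have hsub4 : supp c4 ⊆ (L 1) \ {z, z'} := by
          intro v hv
          have hv' := (hsupp_lt v c4 (by omega)).1 hv
          rw [Finset.mem_sdiff]
          refine ⟨(hmemL 1 v).2 hv'.1, ?_⟩
          rw [Finset.mem_insert, Finset.mem_singleton]
          rintro (rfl | rfl)
          · exact hnz hv'.2
          · exact hnz' hv'.2
        have hzL1 : ({z, z'} : Finset α) ⊆ L 1 := by
          intro v hv
          rw [Finset.mem_insert, Finset.mem_singleton] at hv
          rcases hv with rfl | rfl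
          · exact (hmemL 1 v).2 hzw.1
          · exact (hmemL 1 v).2 hz'w.1
        have hcd : ((L 1) \ ({z, z'} : Finset α)).card = 2 := by
          rw [Finset.card_sdiff_of_subset hzL1, Finset.card_pair hzz', ha]
        have := Finset.card_le_card hsub4
        rw [hsc3 c4 hrkc4, hcd] at this
        omega
      have hS2 : S.card = 2 := by omega
      -- the two covers of w (and of w') are exactly S
      have hCwS : (L 3).filter (w < ·) ⊆ S := by
        intro c hc
        rw [Finset.mem_filter] at hc
        exact hSdef ▸ Finset.mem_filter.2 ⟨hc.1, lt_trans hzw.2 hc.2, lt_trans hz'w.2 hc.2⟩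
      have hCw'S : (L 3).filter (w' < ·) ⊆ S := by
        intro c hc
        rw [Finset.mem_filter] at hc
        exact hSdef ▸ Finset.mem_filter.2 ⟨hc.1, lt_trans hzw' hc.2, lt_trans hz'w' hc.2⟩
      have hCweq : (L 3).filter (w < ·) = S :=
        Finset.eq_of_subset_of_card_le hCwS (by rw [hcnt_above2_3 w hw, hS2])
      have hCw'eq : (L 3).filter (w' < ·) = S :=
        Finset.eq_of_subset_of_card_le hCw'S (by rw [hcnt_above2_3 w' hw', hS2])
      -- a third rank-2 element above z
      have hwT : w ∈ (L 2).filter (z < ·) := Finset.mem_filter.2 ⟨(hmemL 2 w).2 hw, hzw.2⟩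
      have hw'T : w' ∈ (L 2).filter (z < ·) := Finset.mem_filter.2 ⟨(hmemL 2 w').2 hw', hzw'⟩
      have hT2 : ((L 2).filter (z < ·)).card = 3 := hup2 z hzw.1
      have hsd2 : (((L 2).filter (z < ·)) \ {w, w'}).Nonempty := by
        rw [← Finset.card_pos]
        have h1 : (((L 2).filter (z < ·)) \ {w, w'}).card ≥
            ((L 2).filter (z < ·)).card - ({w, w'} : Finset α).card :=
          Finset.le_card_sdiff _ _
        have h2 : ({w, w'} : Finset α).card = 2 := Finset.card_pair hne'
        omega
      obtain ⟨w'', hw''m⟩ := hsd2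
      rw [Finset.mem_sdiff, Finset.mem_filter] at hw''m
      have hw''rk : rk w'' = 2 := (hmemL 2 w'').1 hw''m.1.1
      have hzw'' : z < w'' := hw''m.1.2
      have hw''ne : w'' ≠ w ∧ w'' ≠ w' := by
        constructor <;> intro h <;> apply hw''m.2 <;> rw [h]
        · exact Finset.mem_insert_self _ _
        · exact Finset.mem_insert_of_mem (Finset.mem_singleton_self _)
      -- w'' is not below any element of S
      have hnotlt : ∀ c ∈ S, ¬ w'' < c := by
        intro c hcS hlt
        have hcL3 : c ∈ L 3 := (hSdef ▸ Finset.filter_subset _ _) hcS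
        have hrkc : rk c = 3 := (hmemL 3 c).1 hcL3
        have hzc : z < c := by
          rw [hSdef, Finset.mem_filter] at hcS
          exact hcS.2.1
        have hM := hmid z c hzw.1 hrkc hzc
        have hwM : w ∈ (L 2).filter (fun v => z < v ∧ v < c) := by
          have hwc : w < c := by
            have : c ∈ (L 3).filter (w < ·) := hCweq ▸ hcS
            exact (Finset.mem_filter.1 this).2
          exact Finset.mem_filter.2 ⟨(hmemL 2 w).2 hw, hzw.2, hwc⟩
        have hw'M : w' ∈ (L 2).filter (fun v => z < v ∧ v < c) := by
          have hwc : w' < c := by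
            have : c ∈ (L 3).filter (w' < ·) := hCw'eq ▸ hcS
            exact (Finset.mem_filter.1 this).2
          exact Finset.mem_filter.2 ⟨(hmemL 2 w').2 hw', hzw', hwc⟩
        have hw''M : w'' ∈ (L 2).filter (fun v => z < v ∧ v < c) :=
          Finset.mem_filter.2 ⟨(hmemL 2 w'').2 hw''rk, hzw'', hlt⟩
        have hsub3 : ({w, w', w''} : Finset α) ⊆ (L 2).filter (fun v => z < v ∧ v < c) := by
          intro v hv
          rw [Finset.mem_insert, Finset.mem_insert, Finset.mem_singleton] at hv
          rcases hv with rfl | rfl | rfl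
          · exact hwM
          · exact hw'M
          · exact hw''M
        have hc3 : ({w, w', w''} : Finset α).card = 3 := by
          rw [Finset.card_insert_of_notMem, Finset.card_insert_of_notMem,
            Finset.card_singleton]
          · rw [Finset.mem_singleton]; exact (hw''ne.2 ∘ Eq.symm ∘ Eq.symm) ∘ fun h => h ▸ rfl
          · rw [Finset.mem_insert, Finset.mem_singleton]
            rintro (rfl | rfl)
            · exact hne' rfl
            · exact hw''ne.1 rfl
        have hles := Finset.card_le_card hsub3
        rw [hc3, hM] at hles
        omega
      -- the two covers of w'' would have to avoid S inside the three coatoms above z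
      have hCw'' : ((L 3).filter (fun c => w'' < c)).card = 2 := hcnt_above2_3 w'' hw''rk
      have hsub'' : (L 3).filter (fun c => w'' < c) ⊆ ((L 3).filter (fun c => z < c)) \ S := by
        intro c hc
        have hc1 := Finset.mem_of_mem_filter c hc
        have hc2 := (Finset.mem_filter.1 hc).2
        rw [Finset.mem_sdiff]
        refine ⟨Finset.mem_filter.2 ⟨hc1, lt_trans hzw'' hc2⟩, fun hcS => hnotlt c hcS hc2⟩
      have hsdcard : (((L 3).filter (fun c => z < c)) \ S).card = 1 := by
        rw [Finset.card_sdiff_of_subset hzS, hTz, hS2]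
      have := Finset.card_le_card hsub''
      rw [hCw'', hsdcard] at this
      omega
    -- level-3 injectivity of supp
    have hinj3 : ∀ c c' : α, rk c = 3 → rk c' = 3 → supp c = supp c' → c = c' := by
      intro c c' hc hc' hs
      by_contra hne'
      have hsd : ((L 1) \ supp c).Nonempty := by
        rw [← Finset.card_pos, Finset.card_sdiff_of_subset (hsuppL1 c), hsc3 c hc, ha]
        omega
      obtain ⟨z, hzm⟩ := hsd
      rw [Finset.mem_sdiff] at hzm
      have hz1' : rk z = 1 := (hmemL 1 z).1 hzm.1
      have hTz : ((L 3).filter (fun v => z < v)).card = 3 := hup3 z hz1'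
      have hcnot : c ∉ (L 3).filter (fun v => z < v) := by
        intro h
        exact hzm.2 ((hsupp_mem z c).2 ⟨hz1', (Finset.mem_filter.1 h).2.le⟩)
      have hc'not : c' ∉ (L 3).filter (fun v => z < v) := by
        intro h
        apply hzm.2
        rw [hs]
        exact (hsupp_mem z c').2 ⟨hz1', (Finset.mem_filter.1 h).2.le⟩
      have hsub2 : insert c (insert c' ((L 3).filter (fun v => z < v))) ⊆ L 3 := by
        intro v hv
        rw [Finset.mem_insert, Finset.mem_insert] at hv
        rcases hv with rfl | rfl | hv
        · exact (hmemL 3 v).2 hc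
        · exact (hmemL 3 v).2 hc'
        · exact Finset.mem_of_mem_filter v hv
      have hcard5 : (insert c (insert c' ((L 3).filter (fun v => z < v)))).card = 5 := by
        rw [Finset.card_insert_of_notMem, Finset.card_insert_of_notMem hc'not, hTz]
        rw [Finset.mem_insert]
        rintro (rfl | h)
        · exact hne' rfl
        · exact hcnot h
      have := Finset.card_le_card hsub2
      rw [hcard5, hc4] at this
      omega
    -- supp has card equal to the rank
    have hsc : ∀ x : α, (supp x).card = rk x := by
      intro x
      have h4 := hle4 x
      interval_cases hx : rk x
      · have hxb : x = ⊥ := heq_bot x hx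
        subst hxb
        rw [Finset.card_eq_zero, hsuppdef, Finset.filter_eq_empty_iff]
        intro v hv
        rw [hmemL] at hv
        intro hle
        have := rk_le_of_le hrk hle
        omega
      · rw [hsupp1 x hx, Finset.card_singleton]
      · exact hsc2 x hx
      · exact hsc3 x hx
      · have hxt : x = ⊤ := heq_top x hx
        subst hxt
        have : supp ⊤ = L 1 := by
          ext v
          rw [hsupp_mem, hmemL]
          exact ⟨fun h => h.1, fun h => ⟨h, le_top⟩⟩
        rw [this, ha]
    -- full injectivity of supp
    have hsuppinj : ∀ x y : α, supp x = supp y → x = y := by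
      intro x y hs
      have hr : rk x = rk y := by rw [← hsc x, ← hsc y, hs]
      have h4 := hle4 x
      interval_cases hx : rk x
      · rw [heq_bot x hx, heq_bot y (by omega)]
      · have h1 := hsupp1 x hx
        have h2 := hsupp1 y (by omega)
        rw [h1, h2] at hs
        exact Finset.singleton_injective hs
      · exact hinj2 x y hx (by omega) hs
      · exact hinj3 x y hx (by omega) hs
      · rw [heq_top x hx, heq_top y (by omega)]
    -- order reflection
    have hreflect : ∀ x y : α, supp x ⊆ supp y → x ≤ y := by
      intro x y hss
      have hcle : rk x ≤ rk y := by
        rw [← hsc x, ← hsc y]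
        exact Finset.card_le_card hss
      rcases eq_or_lt_of_le hcle with heqr | hltr
      · have : supp x = supp y :=
          Finset.eq_of_subset_of_card_le hss (by rw [hsc x, hsc y]; omega)
        exact (hsuppinj x y this).le
      · have h4 := hle4 y
        have h4x := hle4 x
        interval_cases hx : rk x
        · rw [heq_bot x hx]; exact bot_le
        · have : x ∈ supp y := hss ((hsupp_mem x x).2 ⟨hx, le_rfl⟩)
          exact ((hsupp_mem x y).1 this).2
        · -- rank 2 below rank 3 or 4
          rcases show rk y = 3 ∨ rk y = 4 by omega with hy | hy
          · -- the powersetCard argument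
            have hDy : ((L 2).filter (· < y)).card = 3 := hdown2_3 y hy
            have hPcard : ((supp y).powersetCard 2).card = 3 := by
              rw [Finset.card_powersetCard, hsc y, hy]; rfl
            have himg : ((L 2).filter (· < y)).image supp ⊆ (supp y).powersetCard 2 := by
              intro t ht
              rw [Finset.mem_image] at ht
              obtain ⟨w, hwm, rfl⟩ := ht
              have hw2 : rk w = 2 := (hmemL 2 w).1 (Finset.mem_of_mem_filter w hwm)
              have hwy : w < y := (Finset.mem_filter.1 hwm).2
              rw [Finset.mem_powersetCard]
              exact ⟨hmono w y hwy.le, hsc2 w hw2⟩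
            have himgcard : (((L 2).filter (· < y)).image supp).card = 3 := by
              rw [Finset.card_image_of_injOn, hDy]
              intro u hu v hv huv
              exact hinj2 u v ((hmemL 2 u).1 (Finset.mem_of_mem_filter u hu))
                ((hmemL 2 v).1 (Finset.mem_of_mem_filter v hv)) huv
            have heqimg : ((L 2).filter (· < y)).image supp = (supp y).powersetCard 2 :=
              Finset.eq_of_subset_of_card_le himg (by omega)
            have hx_mem : supp x ∈ (supp y).powersetCard 2 :=
              Finset.mem_powersetCard.2 ⟨hss, hsc2 x hx⟩
            rw [← heqimg, Finset.mem_image] at hx_mem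
            obtain ⟨w, hwm, hws⟩ := hx_mem
            have hw2 : rk w = 2 := (hmemL 2 w).1 (Finset.mem_of_mem_filter w hwm)
            have : w = x := hinj2 w x hw2 hx hws
            subst this
            exact (Finset.mem_filter.1 hwm).2.le
          · rw [heq_top y hy]; exact le_top
        · have hy : rk y = 4 := by omega
          rw [heq_top y hy]; exact le_top
        · omega
    -- the order isomorphism with the boolean lattice
    have hcard1 : Fintype.card {v : α // v ∈ L 1} = 4 := by
      rw [Fintype.card_coe, ha]
    let e1 : {v : α // v ∈ L 1} ≃ Fin 4 := Fintype.equivFinOfCardEq hcard1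
    let φ : α → Finset (Fin 4) := fun x =>
      Finset.univ.filter (fun i => ((e1.symm i : {v : α // v ∈ L 1}) : α) ≤ x)
    have hφmem : ∀ (i : Fin 4) (x : α), i ∈ φ x ↔ ((e1.symm i : {v : α // v ∈ L 1}) : α) ≤ x := by
      intro i x
      simp only [φ, Finset.mem_filter, Finset.mem_univ, true_and]
    have hφsub : ∀ x y : α, supp x ⊆ supp y → φ x ⊆ φ y := by
      intro x y h i hi
      rw [hφmem] at hi ⊢
      have hv := (e1.symm i).2
      have : (e1.symm i : {v : α // v ∈ L 1}).1 ∈ supp x :=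
        (hsupp_mem _ x).2 ⟨(hmemL 1 _).1 hv, hi⟩
      exact ((hsupp_mem _ y).1 (h this)).2
    have hφsub' : ∀ x y : α, φ x ⊆ φ y → supp x ⊆ supp y := by
      intro x y h v hv
      have hv1 := ((hsupp_mem v x).1 hv).1
      have hv2 := ((hsupp_mem v x).1 hv).2
      have hvL : v ∈ L 1 := (hmemL 1 v).2 hv1
      have hix : e1 ⟨v, hvL⟩ ∈ φ x := by
        rw [hφmem, Equiv.symm_apply_apply]
        exact hv2
      have hiy := h hix
      rw [hφmem, Equiv.symm_apply_apply] at hiy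
      exact (hsupp_mem v y).2 ⟨hv1, hiy⟩
    have hφiff : ∀ x y : α, φ x ⊆ φ y ↔ x ≤ y := by
      intro x y
      constructor
      · intro h
        exact hreflect x y (hφsub' x y h)
      · intro h
        exact hφsub x y (hmono x y h)
    have hφinj : Function.Injective φ := by
      intro x y h
      exact le_antisymm ((hφiff x y).1 (h ▸ Finset.Subset.refl _))
        ((hφiff y x).1 (h ▸ Finset.Subset.refl _))
    -- cardinality of α
    have huniv : (Finset.univ : Finset α) = ((((L 0) ∪ (L 1)) ∪ (L 2)) ∪ (L 3)) ∪ (L 4) := by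
      ext z
      simp only [Finset.mem_univ, true_iff, Finset.mem_union, hmemL]
      have := hle4 z
      omega
    have hdisj : ∀ (k k' : ℕ), k ≠ k' → Disjoint (L k) (L k') := by
      intro k k' hkk
      rw [Finset.disjoint_left]
      intro z h1 h2
      rw [hmemL] at h1 h2
      omega
    have hcard16 : Fintype.card α = 16 := by
      rw [← Finset.card_univ, huniv]
      rw [Finset.card_union_of_disjoint, Finset.card_union_of_disjoint,
        Finset.card_union_of_disjoint, Finset.card_union_of_disjoint]
      · rw [hL0, hL4, Finset.card_singleton, Finset.card_singleton, ha, hm6, hc4]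
      · exact hdisj 0 1 (by omega)
      · rw [Finset.disjoint_left]
        intro z h1 h2
        rw [Finset.mem_union, hmemL, hmemL] at h1
        rw [hmemL] at h2
        omega
      · rw [Finset.disjoint_left]
        intro z h1 h2
        rw [Finset.mem_union, Finset.mem_union, hmemL, hmemL, hmemL] at h1
        rw [hmemL] at h2
        omega
      · rw [Finset.disjoint_left]
        intro z h1 h2
        rw [Finset.mem_union, Finset.mem_union, Finset.mem_union,
          hmemL, hmemL, hmemL, hmemL] at h1
        rw [hmemL] at h2
        omega
    have hbij : Function.Bijective φ := by
      rw [Fintype.bijective_iff_injective_and_card]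
      refine ⟨hφinj, ?_⟩
      rw [hcard16, Fintype.card_finset, Fintype.card_fin]; rfl
    refine ⟨⟨Equiv.ofBijective φ hbij, ?_⟩⟩
    intro a b
    show φ a ≤ φ b ↔ a ≤ b
    rw [Finset.le_iff_subset]
    exact hφiff a b
end

section
/- If Q is an Eulerian poset of odd rank with 0̂ and 1̂, then the k-summation ⊞^k(Q) is Eulerian for every positive integer k. -/
open scoped Classical

set_option linter.unusedSectionVars false

section Statement9Aux

open Finset

variable {Q : Type*} [Fintype Q] [PartialOrder Q] [BoundedOrder Q]

/-- Embedding of `Q` into the `i`-th copy inside `⊞^k Q`. -/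
noncomputable def ksumEmb (k : ℕ) (i : Fin k) (q : Q) : KSum k Q :=
  if h : q = ⊥ then ⊥ else if h' : q = ⊤ then ⊤
  else WithBot.some (WithTop.some ⟨i, ⟨q, h, h'⟩⟩)

variable {k : ℕ}

lemma ksumEmb_bot (i : Fin k) : ksumEmb k i (⊥ : Q) = ⊥ := by simp [ksumEmb]

lemma ksumEmb_top (i : Fin k) (hbt : (⊥ : Q) ≠ ⊤) : ksumEmb k i (⊤ : Q) = ⊤ := by
  simp [ksumEmb, Ne.symm hbt]

lemma ksumEmb_proper (i : Fin k) {q : Q} (h : q ≠ ⊥) (h' : q ≠ ⊤) :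
    ksumEmb k i q = WithBot.some (WithTop.some ⟨i, ⟨q, h, h'⟩⟩) := by
  simp [ksumEmb, h, h']

lemma ksumEmb_proper' (i : Fin k) (p : ProperPart Q) :
    ksumEmb k i p.1 = WithBot.some (WithTop.some ⟨i, p⟩) :=
  ksumEmb_proper i p.2.1 p.2.2

lemma ksumEmb_rk (rk : Q → ℕ) (hrk0 : rk ⊥ = 0) (i : Fin k) (q : Q) :
    ksumRk (k := k) rk (ksumEmb k i q) = rk q := by
  by_cases h : q = ⊥
  · subst h; rw [ksumEmb_bot]; simpa [ksumRk] using hrk0.symm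
  by_cases h' : q = ⊤
  · subst h'
    rw [ksumEmb_top i (fun hc => h hc.symm)]
    rfl
  · rw [ksumEmb_proper i h h']
    rfl

lemma ksumEmb_le_iff (i : Fin k) {a b : Q} (hbt : (⊥ : Q) ≠ ⊤) :
    ksumEmb k i a ≤ ksumEmb k i b ↔ a ≤ b := by
  by_cases ha : a = ⊥
  · subst ha; simp [ksumEmb_bot]
  by_cases hb : b = ⊤
  · subst hb; simp [ksumEmb_top i hbt]
  by_cases ha' : a = ⊤
  · subst ha'
    rw [ksumEmb_top i hbt]
    constructor
    · intro h
      by_cases hb' : b = ⊥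
      · subst hb'
        rw [ksumEmb_bot] at h
        exact absurd (le_antisymm h bot_le) (by simp)
      · rw [ksumEmb_proper i hb' hb] at h
        exact absurd h (by
          intro hc
          exact (WithTop.not_top_le_coe _) (WithBot.coe_le_coe.mp hc))
    · intro h
      exact absurd (top_le_iff.mp h) hb
  by_cases hb' : b = ⊥
  · subst hb'
    rw [ksumEmb_bot, ksumEmb_proper i ha ha']
    constructor
    · intro h; exact absurd h (WithBot.not_coe_le_bot _)
    · intro h; exact absurd (le_bot_iff.mp h) ha
  · rw [ksumEmb_proper i ha ha', ksumEmb_proper i hb' hb]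
    rw [WithBot.coe_le_coe, WithTop.coe_le_coe, Sigma.mk_le_mk_iff]
    exact Subtype.mk_le_mk

lemma ksumEmb_inj (i : Fin k) (hbt : (⊥ : Q) ≠ ⊤) {a b : Q}
    (h : ksumEmb k i a = ksumEmb k i b) : a = b :=
  le_antisymm ((ksumEmb_le_iff i hbt).mp h.le) ((ksumEmb_le_iff i hbt).mp h.ge)

lemma ksumEmb_surj (i : Fin k) (hbt : (⊥ : Q) ≠ ⊤) {a b : Q} (hab : a ≠ ⊥ ∨ b ≠ ⊤)
    {z : KSum k Q} (h1 : ksumEmb k i a ≤ z) (h2 : z ≤ ksumEmb k i b) :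
    ∃ q : Q, ksumEmb k i q = z := by
  induction z using WithBot.recBotCoe with
  | bot => exact ⟨⊥, ksumEmb_bot i⟩
  | coe w =>
    induction w using WithTop.recTopCoe with
    | top => exact ⟨⊤, ksumEmb_top i hbt⟩
    | coe s =>
      obtain ⟨j, p⟩ := s
      have hij : i = j := by
        by_cases ha : a = ⊥
        · subst ha
          have hb : b ≠ ⊤ := hab.resolve_left (by simp)
          by_cases hb' : b = ⊥
          · subst hb'
            rw [ksumEmb_bot] at h2
            exact absurd h2 (WithBot.not_coe_le_bot _)
          · rw [ksumEmb_proper i hb' hb] at h2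
            obtain ⟨hj, -⟩ := Sigma.le_def.mp (WithTop.coe_le_coe.mp (WithBot.coe_le_coe.mp h2))
            exact hj.symm
        · by_cases ha' : a = ⊤
          · subst ha'
            rw [ksumEmb_top i hbt] at h1
            exact absurd (WithBot.coe_le_coe.mp h1) (WithTop.not_top_le_coe _)
          · rw [ksumEmb_proper i ha ha'] at h1
            obtain ⟨hj, -⟩ := Sigma.le_def.mp (WithTop.coe_le_coe.mp (WithBot.coe_le_coe.mp h1))
            exact hj
      subst hij
      exact ⟨p.1, by rw [ksumEmb_proper i p.2.1 p.2.2]⟩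

lemma ksum_card_interval (rk : Q → ℕ) (hrk0 : rk ⊥ = 0) (hbt : (⊥ : Q) ≠ ⊤) (i : Fin k)
    {a b : Q} (hab : a ≠ ⊥ ∨ b ≠ ⊤) (pred : ℕ → Prop) [DecidablePred pred] :
    (Finset.univ.filter fun z : KSum k Q =>
        ksumEmb k i a ≤ z ∧ z ≤ ksumEmb k i b ∧ pred (ksumRk (k := k) rk z)).card =
      (Finset.univ.filter fun q : Q => a ≤ q ∧ q ≤ b ∧ pred (rk q)).card := by
  classical
  symm
  apply Finset.card_bij (fun q _ => ksumEmb k i q)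
  · intro q hq
    simp only [mem_filter, mem_univ, true_and] at hq ⊢
    exact ⟨(ksumEmb_le_iff i hbt).mpr hq.1, (ksumEmb_le_iff i hbt).mpr hq.2.1,
      by rw [ksumEmb_rk rk hrk0]; exact hq.2.2⟩
  · intro q₁ _ q₂ _ h
    exact ksumEmb_inj i hbt h
  · intro z hz
    simp only [mem_filter, mem_univ, true_and] at hz
    obtain ⟨q, hq⟩ := ksumEmb_surj i hbt hab hz.1 hz.2.1
    refine ⟨q, ?_, hq⟩
    simp only [mem_filter, mem_univ, true_and]
    rw [← hq] at hz
    exact ⟨(ksumEmb_le_iff i hbt).mp hz.1, (ksumEmb_le_iff i hbt).mp hz.2.1,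
      by rw [← ksumEmb_rk rk hrk0 i q]; exact hz.2.2⟩

lemma ksum_card_total (rk : Q → ℕ) (pred : ℕ → Prop) [DecidablePred pred] :
    (Finset.univ.filter fun z : KSum k Q => pred (ksumRk (k := k) rk z)).card =
      ((if pred 0 then 1 else 0) + (if pred (rk ⊤) then 1 else 0)) +
        k * (Finset.univ.filter fun p : ProperPart Q => pred (rk p.1)).card := by
  classical
  rw [Finset.card_filter]
  rw [show (∑ z : KSum k Q, if pred (ksumRk (k := k) rk z) then 1 else 0) =
      ∑ z : Option (Option ((_ : Fin k) × ProperPart Q)),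
        if pred (ksumRk (k := k) rk z) then 1 else 0 from rfl,
    Fintype.sum_option, Fintype.sum_option, ← Finset.univ_sigma_univ, Finset.sum_sigma]
  have h1 : ∀ i : Fin k, (∑ p : ProperPart Q,
      if pred (ksumRk (k := k) rk (some (some ⟨i, p⟩))) then 1 else 0) =
      (Finset.univ.filter fun p : ProperPart Q => pred (rk p.1)).card := by
    intro i
    rw [Finset.card_filter]
    rfl
  erw [Finset.sum_congr rfl (fun i _ => h1 i)]
  simp only [Finset.sum_const, Finset.card_univ, Fintype.card_fin, smul_eq_mul]
  rw [add_assoc]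
  rfl

lemma q_card_total (rk : Q → ℕ) (hrk0 : rk ⊥ = 0) (hbt : (⊥ : Q) ≠ ⊤)
    (pred : ℕ → Prop) [DecidablePred pred] :
    (Finset.univ.filter fun q : Q => pred (rk q)).card =
      ((if pred 0 then 1 else 0) + (if pred (rk ⊤) then 1 else 0)) +
        (Finset.univ.filter fun p : ProperPart Q => pred (rk p.1)).card := by
  classical
  rw [Finset.card_filter, ← Finset.sum_filter_add_sum_filter_not Finset.univ
    (fun q : Q => q = ⊥ ∨ q = ⊤)]
  congr 1
  · have : Finset.univ.filter (fun q : Q => q = ⊥ ∨ q = ⊤) = {⊥, ⊤} := by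
      ext q; simp [or_comm]
    rw [this, Finset.sum_pair hbt, hrk0]
  · rw [Finset.card_filter]
    rw [Finset.sum_subtype (Finset.univ.filter fun q : Q => ¬(q = ⊥ ∨ q = ⊤))
      (p := fun q : Q => q ≠ ⊥ ∧ q ≠ ⊤) (by intro x; simp [not_or]) (fun q => if pred (rk q) then 1 else 0)]

end Statement9Aux

/-- The `k`-summation of an Eulerian poset of odd rank is Eulerian. -/
theorem statement9 {Q : Type*} [Fintype Q] [PartialOrder Q] [BoundedOrder Q]
    (rk : Q → ℕ) (hrk : IsRankFunction rk) (hodd : Odd (rk ⊤)) (hE : IsEulerian rk)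
    (k : ℕ) (hk : 0 < k) :
    IsEulerian (ksumRk (k := k) rk) := by
  have hne : ¬ Even (rk ⊤) := (Nat.not_even_iff_odd.mpr hodd)
  have hbt : (⊥ : Q) ≠ ⊤ := fun h => hne (by rw [← h, hrk.1]; exact Even.zero)
  intro x y
  induction x using WithBot.recBotCoe with
  | bot =>
    induction y using WithBot.recBotCoe with
    | bot => intro h; exact absurd h (lt_irrefl _)
    | coe w =>
      induction w using WithTop.recTopCoe with
      | top =>
        intro _
        have hQ : (Finset.univ.filter fun q : Q => Even (rk q)).card =
            (Finset.univ.filter fun q : Q => ¬ Even (rk q)).card := by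
          have h := hE ⊥ ⊤ (lt_of_le_of_ne bot_le hbt)
          unfold EulerPoincare at h
          have h1 : (Finset.univ.filter fun q : Q => ⊥ ≤ q ∧ q ≤ ⊤ ∧ Even (rk q)).card =
              (Finset.univ.filter fun q : Q => Even (rk q)).card := by
            congr 1
            exact Finset.filter_congr fun q _ => ⟨fun h => h.2.2, fun h => ⟨bot_le, le_top, h⟩⟩
          have h2 : (Finset.univ.filter fun q : Q => ⊥ ≤ q ∧ q ≤ ⊤ ∧ ¬ Even (rk q)).card =
              (Finset.univ.filter fun q : Q => ¬ Even (rk q)).card := by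
            congr 1
            exact Finset.filter_congr fun q _ => ⟨fun h => h.2.2, fun h => ⟨bot_le, le_top, h⟩⟩
          calc _ = _ := h1.symm
            _ = _ := h
            _ = _ := h2
        have hQ' : (Finset.univ.filter fun p : ProperPart Q => Even (rk p.1)).card =
            (Finset.univ.filter fun p : ProperPart Q => ¬ Even (rk p.1)).card := by
          have hq1 := q_card_total (Q := Q) rk hrk.1 hbt (fun n => Even n)
          have hq2 := q_card_total (Q := Q) rk hrk.1 hbt (fun n => ¬ Even n)
          rw [hq1, hq2] at hQ
          simp only [if_pos Even.zero, if_neg hne, if_neg (not_not_intro Even.zero),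
            if_pos hne] at hQ
          omega
        have key : (Finset.univ.filter fun z : KSum k Q => Even (ksumRk (k := k) rk z)).card =
            (Finset.univ.filter fun z : KSum k Q => ¬ Even (ksumRk (k := k) rk z)).card := by
          rw [ksum_card_total (k := k) rk (fun n => Even n),
            ksum_card_total (k := k) rk (fun n => ¬ Even n), hQ']
          simp only [if_pos Even.zero, if_neg hne, if_neg (not_not_intro Even.zero),
            if_pos hne]
        unfold EulerPoincare
        convert key using 2
        · ext z
          simp only [Finset.mem_filter, Finset.mem_univ, true_and]
          exact ⟨fun h => h.2.2, fun h => ⟨bot_le, le_top, h⟩⟩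
        · ext z
          simp only [Finset.mem_filter, Finset.mem_univ, true_and]
          exact ⟨fun h => h.2.2, fun h => ⟨bot_le, le_top, h⟩⟩
      | coe s =>
        obtain ⟨j, p⟩ := s
        intro _
        have key : (Finset.univ.filter fun z : KSum k Q =>
              ksumEmb k j ⊥ ≤ z ∧ z ≤ ksumEmb k j p.1 ∧ Even (ksumRk (k := k) rk z)).card =
            (Finset.univ.filter fun z : KSum k Q =>
              ksumEmb k j ⊥ ≤ z ∧ z ≤ ksumEmb k j p.1 ∧ ¬ Even (ksumRk (k := k) rk z)).card := by
          rw [ksum_card_interval rk hrk.1 hbt j (Or.inr p.2.2) (fun n => Even n),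
            ksum_card_interval rk hrk.1 hbt j (Or.inr p.2.2) (fun n => ¬ Even n)]
          exact hE ⊥ p.1 (Ne.bot_lt p.2.1)
        unfold EulerPoincare
        convert key using 2
        · ext z
          simp only [Finset.mem_filter, Finset.mem_univ, true_and]
          rw [ksumEmb_bot j, ksumEmb_proper' j p]
        · ext z
          simp only [Finset.mem_filter, Finset.mem_univ, true_and]
          rw [ksumEmb_bot j, ksumEmb_proper' j p]
  | coe w =>
    induction w using WithTop.recTopCoe with
    | top =>
      intro h
      exact absurd h (le_top (α := KSum k Q) (a := y)).not_gt
    | coe s =>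
      obtain ⟨i, p⟩ := s
      induction y using WithBot.recBotCoe with
      | bot =>
        intro h
        exact absurd h (bot_le (α := KSum k Q)).not_gt
      | coe w' =>
        induction w' using WithTop.recTopCoe with
        | top =>
          intro _
          have key : (Finset.univ.filter fun z : KSum k Q =>
                ksumEmb k i p.1 ≤ z ∧ z ≤ ksumEmb k i ⊤ ∧ Even (ksumRk (k := k) rk z)).card =
              (Finset.univ.filter fun z : KSum k Q =>
                ksumEmb k i p.1 ≤ z ∧ z ≤ ksumEmb k i ⊤ ∧ ¬ Even (ksumRk (k := k) rk z)).card := by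
            rw [ksum_card_interval rk hrk.1 hbt i (Or.inl p.2.1) (fun n => Even n),
              ksum_card_interval rk hrk.1 hbt i (Or.inl p.2.1) (fun n => ¬ Even n)]
            exact hE p.1 ⊤ (Ne.lt_top p.2.2)
          unfold EulerPoincare
          convert key using 2
          · ext z
            simp only [Finset.mem_filter, Finset.mem_univ, true_and]
            rw [ksumEmb_proper' i p, ksumEmb_top i hbt]
            exact Iff.rfl
          · ext z
            simp only [Finset.mem_filter, Finset.mem_univ, true_and]
            rw [ksumEmb_proper' i p, ksumEmb_top i hbt]
            exact Iff.rfl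
        | coe s' =>
          obtain ⟨j, q⟩ := s'
          intro hxy
          obtain ⟨hij, -⟩ :=
            Sigma.le_def.mp (WithTop.coe_le_coe.mp (WithBot.coe_le_coe.mp hxy.le))
          have hij' : i = j := hij
          subst hij'
          have hle : p.1 ≤ q.1 := (ksumEmb_le_iff i hbt).mp
            (by rw [ksumEmb_proper' i p, ksumEmb_proper' i q]; exact hxy.le)
          have hlt : p.1 < q.1 := by
            refine lt_of_le_of_ne hle ?_
            intro hc
            exact hxy.ne (by rw [Subtype.ext hc])
          have key : (Finset.univ.filter fun z : KSum k Q =>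
                ksumEmb k i p.1 ≤ z ∧ z ≤ ksumEmb k i q.1 ∧ Even (ksumRk (k := k) rk z)).card =
              (Finset.univ.filter fun z : KSum k Q =>
                ksumEmb k i p.1 ≤ z ∧ z ≤ ksumEmb k i q.1 ∧ ¬ Even (ksumRk (k := k) rk z)).card := by
            rw [ksum_card_interval rk hrk.1 hbt i (Or.inl p.2.1) (fun n => Even n),
              ksum_card_interval rk hrk.1 hbt i (Or.inl p.2.1) (fun n => ¬ Even n)]
            exact hE p.1 q.1 hlt
          unfold EulerPoincare
          convert key using 2
          · ext z
            simp only [Finset.mem_filter, Finset.mem_univ, true_and]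
            rw [ksumEmb_proper' i p, ksumEmb_proper' i q]
          · ext z
            simp only [Finset.mem_filter, Finset.mem_univ, true_and]
            rw [ksumEmb_proper' i p, ksumEmb_proper' i q]
end
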